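/- arXiv:1610.05162 — 7 statements merged into one kernel-verified Lean document; each statement's English description precedes it below -/
import Mathlib

section
/- Let $p\in[1,\infty]$ and $f\in L^p(\mathbb{R}^N)$. If $A:=\sup_{h\neq 0}\|f(\cdot+h)-f\|_{L^p(\mathbb{R}^N)}/|h|$ is finite, then $A=\limsup_{|h|\to 0}\|f(\cdot+h)-f\|_{L^p(\mathbb{R}^N)}/|h|$. -/
open MeasureTheory Filter Topology ENNReal

section aux

variable {N : ℕ} {p : ℝ≥0∞} {f : EuclideanSpace ℝ (Fin N) → ℝ}

lemma aesm_shift (hf : AEStronglyMeasurable f (volume : Measure (EuclideanSpace ℝ (Fin N))))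
    (c : EuclideanSpace ℝ (Fin N)) :
    AEStronglyMeasurable (fun x => f (x + c)) (volume : Measure (EuclideanSpace ℝ (Fin N))) :=
  hf.comp_measurePreserving (measurePreserving_add_right volume c)

lemma eLpNorm_shift (hf : AEStronglyMeasurable f (volume : Measure (EuclideanSpace ℝ (Fin N))))
    (c h : EuclideanSpace ℝ (Fin N)) :
    eLpNorm (fun x => f (x + c + h) - f (x + c)) p volume
      = eLpNorm (fun x => f (x + h) - f x) p volume := by
  have := eLpNorm_comp_measurePreserving (p := p)
    (g := fun x => f (x + h) - f x) ((aesm_shift hf h).sub hf)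
    (measurePreserving_add_right volume c)
  exact this

lemma key_subadd (hp : 1 ≤ p) (hf : MemLp f p volume) (h : EuclideanSpace ℝ (Fin N)) (n : ℕ) :
    eLpNorm (fun x => f (x + (n : ℝ) • h) - f x) p volume
      ≤ n * eLpNorm (fun x => f (x + h) - f x) p volume := by
  induction n with
  | zero => simp
  | succ n ih =>
    have key : (fun x : EuclideanSpace ℝ (Fin N) => f (x + ((n : ℝ) + 1) • h) - f x)
        = fun x => (f (x + (n : ℝ) • h + h) - f (x + (n : ℝ) • h))
            + (f (x + (n : ℝ) • h) - f x) := by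
      funext x
      have : x + ((n : ℝ) + 1) • h = x + (n : ℝ) • h + h := by
        rw [add_smul, one_smul, add_assoc]
      rw [this]; ring
    have hsm := hf.aestronglyMeasurable
    push_cast
    calc eLpNorm (fun x => f (x + ((n : ℝ) + 1) • h) - f x) p volume
        = eLpNorm ((fun x => (f (x + (n : ℝ) • h + h) - f (x + (n : ℝ) • h)))
            + fun x => (f (x + (n : ℝ) • h) - f x)) p volume := by
          push_cast
          rw [key]; rfl
      _ ≤ eLpNorm (fun x => f (x + (n : ℝ) • h + h) - f (x + (n : ℝ) • h)) p volume
            + eLpNorm (fun x => f (x + (n : ℝ) • h) - f x) p volume := by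
          refine eLpNorm_add_le ?_ ?_ hp
          · have he : (fun x : EuclideanSpace ℝ (Fin N) => f (x + (n : ℝ) • h + h))
                = fun x => f (x + ((n : ℝ) • h + h)) := by
              funext x; rw [add_assoc]
            exact (he ▸ aesm_shift hsm ((n : ℝ) • h + h)).sub
              (aesm_shift hsm ((n : ℝ) • h))
          · exact (aesm_shift hsm ((n : ℝ) • h)).sub hsm
      _ = eLpNorm (fun x => f (x + h) - f x) p volume
            + eLpNorm (fun x => f (x + (n : ℝ) • h) - f x) p volume := by
          rw [eLpNorm_shift hsm ((n : ℝ) • h) h]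
      _ ≤ eLpNorm (fun x => f (x + h) - f x) p volume
            + n * eLpNorm (fun x => f (x + h) - f x) p volume := by gcongr
      _ = ((n : ℝ≥0∞) + 1) * eLpNorm (fun x => f (x + h) - f x) p volume := by
          ring

end aux

/-- If `A := sup_{h ≠ 0} ‖f(·+h)-f‖_{L^p}/|h|` is finite, then
`A = limsup_{|h|→0} ‖f(·+h)-f‖_{L^p}/|h|`. -/
theorem sup_eq_limsup_diff_quotient (N : ℕ) (p : ℝ≥0∞) (hp : 1 ≤ p)
    (f : EuclideanSpace ℝ (Fin N) → ℝ) (hf : MemLp f p volume)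
    (hA : (⨆ h : {h : EuclideanSpace ℝ (Fin N) // h ≠ 0},
        eLpNorm (fun x => f (x + h.1) - f x) p volume / ENNReal.ofReal ‖h.1‖) < ⊤) :
    (⨆ h : {h : EuclideanSpace ℝ (Fin N) // h ≠ 0},
        eLpNorm (fun x => f (x + h.1) - f x) p volume / ENNReal.ofReal ‖h.1‖) =
      Filter.limsup
        (fun h : EuclideanSpace ℝ (Fin N) =>
          eLpNorm (fun x => f (x + h) - f x) p volume / ENNReal.ofReal ‖h‖)
        (𝓝[≠] (0 : EuclideanSpace ℝ (Fin N))) := by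
  set u : EuclideanSpace ℝ (Fin N) → ℝ≥0∞ := fun h =>
    eLpNorm (fun x => f (x + h) - f x) p volume / ENNReal.ofReal ‖h‖ with hu
  apply le_antisymm
  · -- sup ≤ limsup
    refine iSup_le fun ⟨h, hh⟩ => ?_
    -- u h ≤ u ((n:ℝ)⁻¹ • h) for n ≥ 1
    have hstep : ∀ n : ℕ, 1 ≤ n → u h ≤ u ((n : ℝ)⁻¹ • h) := by
      intro n hn
      have hn0 : (n : ℝ) ≠ 0 := by positivity
      have hrec : (n : ℝ) • ((n : ℝ)⁻¹ • h) = h := by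
        rw [smul_smul, mul_inv_cancel₀ hn0, one_smul]
      have hnum : eLpNorm (fun x => f (x + h) - f x) p volume
          ≤ n * eLpNorm (fun x => f (x + (n : ℝ)⁻¹ • h) - f x) p volume := by
        conv_lhs => rw [← hrec]
        exact key_subadd hp hf _ n
      have hnorm : ENNReal.ofReal ‖h‖ = n * ENNReal.ofReal ‖(n : ℝ)⁻¹ • h‖ := by
        rw [← hrec, norm_smul]
        simp only [Real.norm_natCast]
        rw [ENNReal.ofReal_mul (by positivity), ENNReal.ofReal_natCast, hrec]
      rw [hu]
      simp only
      rw [hnorm]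
      calc eLpNorm (fun x => f (x + h) - f x) p volume
            / ((n : ℝ≥0∞) * ENNReal.ofReal ‖(n : ℝ)⁻¹ • h‖)
          ≤ ((n : ℝ≥0∞) * eLpNorm (fun x => f (x + (n : ℝ)⁻¹ • h) - f x) p volume)
            / ((n : ℝ≥0∞) * ENNReal.ofReal ‖(n : ℝ)⁻¹ • h‖) := by gcongr
        _ = eLpNorm (fun x => f (x + (n : ℝ)⁻¹ • h) - f x) p volume
            / ENNReal.ofReal ‖(n : ℝ)⁻¹ • h‖ := by
            rw [ENNReal.mul_div_mul_left _ _
              (by exact_mod_cast (show n ≠ 0 by omega)) (ENNReal.natCast_ne_top n)]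
    set g : ℕ → EuclideanSpace ℝ (Fin N) := fun n => (n : ℝ)⁻¹ • h with hg
    have htend : Tendsto g atTop (𝓝[≠] (0 : EuclideanSpace ℝ (Fin N))) := by
      apply tendsto_nhdsWithin_of_tendsto_nhds_of_eventually_within
      · have : Tendsto (fun n : ℕ => (n : ℝ)⁻¹) atTop (𝓝 0) :=
          tendsto_inv_atTop_zero.comp tendsto_natCast_atTop_atTop
        simpa [hg] using this.smul_const h
      · filter_upwards [eventually_ge_atTop 1] with n hn
        have hn0 : (n : ℝ) ≠ 0 := by positivity
        simp [hg, Set.mem_compl_iff, smul_eq_zero, hn0, hh]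
    show u h ≤ _
    calc u h ≤ limsup (u ∘ g) atTop :=
          le_limsup_of_frequently_le'
            ((eventually_ge_atTop 1).mono (fun n hn => hstep n hn)).frequently
      _ ≤ limsup u (𝓝[≠] (0 : EuclideanSpace ℝ (Fin N))) := by
          rw [Filter.limsup_comp]
          exact limsup_le_limsup_of_le htend
  · -- limsup ≤ sup
    apply limsup_le_of_le (by isBoundedDefault)
    filter_upwards [self_mem_nhdsWithin] with h hh
    exact le_iSup (fun h : {h : EuclideanSpace ℝ (Fin N) // h ≠ 0} =>
      eLpNorm (fun x => f (x + h.1) - f x) p volume / ENNReal.ofReal ‖h.1‖) ⟨h, hh⟩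
end

section
/- Let $p\in[1,\infty]$, $M\in\mathbb{N}^*$, and $h_1,h_2\in\mathbb{R}^N$ with $h=h_1+h_2$. Then there is a constant $C>0$ depending only on $M$ such that for all $f\in L^p(\mathbb{R}^N)$, $\|\Delta_h^{2M}f\|_{L^p(\mathbb{R}^N)} \leq C\left(\|\Delta_{h_1}^{M}f\|_{L^p(\mathbb{R}^N)} + \|\Delta_{h_2}^{M}f\|_{L^p(\mathbb{R}^N)}\right).$ -/
open MeasureTheory Filter Topology ENNReal Finset

/-- The `M`-th order forward finite difference
`Δ_h^M f (x) = ∑_{j=0}^M (-1)^{M-j} C(M,j) f(x + j h)`. -/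
noncomputable def fdiff {N : ℕ} (M : ℕ) (h : EuclideanSpace ℝ (Fin N))
    (f : EuclideanSpace ℝ (Fin N) → ℝ) (x : EuclideanSpace ℝ (Fin N)) : ℝ :=
  ∑ j ∈ Finset.range (M + 1), (-1 : ℝ) ^ (M - j) * (M.choose j : ℝ) * f (x + (j : ℝ) • h)

open fwdDiff fwdDiff_aux

namespace FdiffAux

variable {N : ℕ}

local notation "V" => EuclideanSpace ℝ (Fin N)

lemma fdiff_eq_iter (M : ℕ) (h : V) (f : V → ℝ) :
    fdiff M h f = (fwdDiff h)^[M] f := by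
  funext x
  rw [fwdDiff_iter_eq_sum_shift]
  unfold fdiff
  refine Finset.sum_congr rfl fun j hj => ?_
  rw [Nat.cast_smul_eq_nsmul, zsmul_eq_mul]
  push_cast
  ring

lemma shift_mul (a b : V) :
    shiftₗ V ℝ a * shiftₗ V ℝ b = shiftₗ V ℝ (a + b) := by
  apply LinearMap.ext fun f => funext fun x => ?_
  simp only [Module.End.mul_apply, shiftₗ_apply, add_assoc]

lemma commute_SS (a b : V) : Commute (shiftₗ V ℝ a) (shiftₗ V ℝ b) := by
  unfold Commute SemiconjBy
  rw [shift_mul, shift_mul, add_comm]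

lemma fwdDiffₗ_eq (a : V) : fwdDiffₗ V ℝ a = shiftₗ V ℝ a - 1 := by
  rw [shiftₗ, add_sub_cancel_right]

lemma commute_SD (a b : V) : Commute (shiftₗ V ℝ a) (fwdDiffₗ V ℝ b) := by
  rw [fwdDiffₗ_eq]
  exact (commute_SS a b).sub_right (Commute.one_right _)

lemma commute_DD (a b : V) : Commute (fwdDiffₗ V ℝ a) (fwdDiffₗ V ℝ b) := by
  rw [fwdDiffₗ_eq, fwdDiffₗ_eq]
  exact ((commute_SS a b).sub_right (Commute.one_right _)).sub_left
    ((Commute.one_left _).sub_right (Commute.one_left _))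

lemma decomp (h₁ h₂ : V) :
    fwdDiffₗ V ℝ (h₁ + h₂) =
      shiftₗ V ℝ h₂ * fwdDiffₗ V ℝ h₁ + fwdDiffₗ V ℝ h₂ := by
  apply LinearMap.ext fun f => funext fun x => ?_
  simp only [LinearMap.add_apply, Pi.add_apply, Module.End.mul_apply, shiftₗ_apply,
    fwdDiffₗ_apply, fwdDiff]
  have hx : x + h₂ + h₁ = x + (h₁ + h₂) := by abel
  rw [hx]
  ring

lemma aesm_shift {f : V → ℝ} (hf : AEStronglyMeasurable f volume) (a : V) :
    AEStronglyMeasurable (fun x => f (x + a)) volume :=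
  hf.comp_measurePreserving (measurePreserving_add_right volume a)

lemma aesm_fwdDiff {f : V → ℝ} (hf : AEStronglyMeasurable f volume) (a : V) :
    AEStronglyMeasurable (fwdDiff a f) volume :=
  (aesm_shift hf a).sub hf

lemma aesm_fwdDiff_iter {f : V → ℝ} (hf : AEStronglyMeasurable f volume) (a : V) (n : ℕ) :
    AEStronglyMeasurable ((fwdDiff a)^[n] f) volume := by
  induction n with
  | zero => simpa using hf
  | succ n ih => rw [Function.iterate_succ_apply']; exact aesm_fwdDiff ih a

lemma eLpNorm_shift (f : V → ℝ) (hf : AEStronglyMeasurable f volume) (a : V) (p : ℝ≥0∞) :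
    eLpNorm (fun x => f (x + a)) p volume = eLpNorm f p volume :=
  eLpNorm_comp_measurePreserving hf (measurePreserving_add_right volume a)

lemma eLpNorm_fwdDiff_le {p : ℝ≥0∞} (hp : 1 ≤ p) {f : V → ℝ}
    (hf : AEStronglyMeasurable f volume) (a : V) :
    eLpNorm (fwdDiff a f) p volume ≤ 2 * eLpNorm f p volume := by
  have h1 : fwdDiff a f = (fun x => f (x + a)) - f := rfl
  calc eLpNorm (fwdDiff a f) p volume
      ≤ eLpNorm (fun x => f (x + a)) p volume + eLpNorm f p volume := by
        rw [h1]; exact eLpNorm_sub_le (aesm_shift hf a) hf hp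
    _ = 2 * eLpNorm f p volume := by rw [eLpNorm_shift f hf a, two_mul]

lemma eLpNorm_fwdDiff_iter_le {p : ℝ≥0∞} (hp : 1 ≤ p) {f : V → ℝ}
    (hf : AEStronglyMeasurable f volume) (a : V) (n : ℕ) :
    eLpNorm ((fwdDiff a)^[n] f) p volume ≤ 2 ^ n * eLpNorm f p volume := by
  induction n with
  | zero => simp
  | succ n ih =>
      rw [Function.iterate_succ_apply']
      calc eLpNorm (fwdDiff a ((fwdDiff a)^[n] f)) p volume
          ≤ 2 * eLpNorm ((fwdDiff a)^[n] f) p volume :=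
            eLpNorm_fwdDiff_le hp (aesm_fwdDiff_iter hf a n) a
        _ ≤ 2 * (2 ^ n * eLpNorm f p volume) := mul_le_mul_right ih 2
        _ = 2 ^ (n + 1) * eLpNorm f p volume := by ring

lemma Dpow_apply (a : V) (n : ℕ) (f : V → ℝ) :
    (fwdDiffₗ V ℝ a ^ n) f = (fwdDiff a)^[n] f := by
  rw [← coe_fwdDiffₗ_pow]

lemma aesm_Dpow {f : V → ℝ} (hf : AEStronglyMeasurable f volume) (a : V) (n : ℕ) :
    AEStronglyMeasurable ((fwdDiffₗ V ℝ a ^ n) f) volume := by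
  rw [Dpow_apply]; exact aesm_fwdDiff_iter hf a n

lemma eLpNorm_Dpow_le {p : ℝ≥0∞} (hp : 1 ≤ p) {f : V → ℝ}
    (hf : AEStronglyMeasurable f volume) (a : V) (n : ℕ) :
    eLpNorm ((fwdDiffₗ V ℝ a ^ n) f) p volume ≤ 2 ^ n * eLpNorm f p volume := by
  rw [Dpow_apply]; exact eLpNorm_fwdDiff_iter_le hp hf a n

lemma Spow_apply (a : V) (k : ℕ) (f : V → ℝ) :
    (shiftₗ V ℝ a ^ k) f = fun x => f (x + k • a) :=
  funext fun x => shiftₗ_pow_apply a f k x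

lemma aesm_Spow {f : V → ℝ} (hf : AEStronglyMeasurable f volume) (a : V) (k : ℕ) :
    AEStronglyMeasurable ((shiftₗ V ℝ a ^ k) f) volume := by
  rw [Spow_apply]; exact aesm_shift hf (k • a)

lemma eLpNorm_Spow (a : V) (k : ℕ) {f : V → ℝ} (hf : AEStronglyMeasurable f volume)
    (p : ℝ≥0∞) :
    eLpNorm ((shiftₗ V ℝ a ^ k) f) p volume = eLpNorm f p volume := by
  rw [Spow_apply]; exact eLpNorm_shift f hf (k • a) p

end FdiffAux

open FdiffAux

/-- If `h = h₁ + h₂`, then `‖Δ_h^{2M} f‖_{L^p} ≤ C (‖Δ_{h₁}^M f‖_{L^p} + ‖Δ_{h₂}^M f‖_{L^p})`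
with `C` depending only on `M`. -/
theorem fdiff_two_M_le (N M : ℕ) (hM : 1 ≤ M) :
    ∃ C : ℝ, 0 < C ∧ ∀ (p : ℝ≥0∞), 1 ≤ p →
      ∀ (f : EuclideanSpace ℝ (Fin N) → ℝ), MemLp f p volume →
        ∀ h₁ h₂ : EuclideanSpace ℝ (Fin N),
          eLpNorm (fdiff (2 * M) (h₁ + h₂) f) p volume ≤
            ENNReal.ofReal C *
              (eLpNorm (fdiff M h₁ f) p volume + eLpNorm (fdiff M h₂ f) p volume) := by
  refine ⟨(2 : ℝ) ^ (3 * M), by positivity, fun p hp f hfp h₁ h₂ => ?_⟩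
  have hf : AEStronglyMeasurable f volume := hfp.aestronglyMeasurable
  set S : Module.End ℤ (EuclideanSpace ℝ (Fin N) → ℝ) := shiftₗ _ ℝ h₂ with hS
  set D₁ : Module.End ℤ (EuclideanSpace ℝ (Fin N) → ℝ) := fwdDiffₗ _ ℝ h₁ with hD₁
  set D₂ : Module.End ℤ (EuclideanSpace ℝ (Fin N) → ℝ) := fwdDiffₗ _ ℝ h₂ with hD₂
  set A : Module.End ℤ (EuclideanSpace ℝ (Fin N) → ℝ) := S * D₁ with hA
  have hcSD₁ : Commute S D₁ := commute_SD h₂ h₁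
  have hcSD₂ : Commute S D₂ := commute_SD h₂ h₂
  have hcD : Commute D₁ D₂ := commute_DD h₁ h₂
  have hAB : Commute A D₂ := hcSD₂.mul_left hcD
  -- binomial expansion of the operator
  have key : (fwdDiffₗ _ ℝ (h₁ + h₂)) ^ (2 * M) =
      ∑ k ∈ range (2 * M + 1),
        A ^ k * D₂ ^ (2 * M - k) *
          ((2 * M).choose k : Module.End ℤ (EuclideanSpace ℝ (Fin N) → ℝ)) := by
    rw [decomp h₁ h₂, ← hS, ← hD₁, ← hD₂, ← hA]
    exact hAB.add_pow (2 * M)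
  -- function-level expansion
  have hfun : fdiff (2 * M) (h₁ + h₂) f =
      ∑ k ∈ range (2 * M + 1),
        ((2 * M).choose k) • ((A ^ k * D₂ ^ (2 * M - k)) f) := by
    rw [fdiff_eq_iter, ← Dpow_apply, key, LinearMap.sum_apply]
    refine Finset.sum_congr rfl fun k _ => ?_
    rw [Module.End.mul_apply, Module.End.natCast_apply, map_nsmul]
  have happ : ∀ k j : ℕ, (A ^ k * D₂ ^ j) f = (S ^ k) ((D₁ ^ k) ((D₂ ^ j) f)) := by
    intro k j
    rw [hA, hcSD₁.mul_pow, mul_assoc, Module.End.mul_apply, Module.End.mul_apply]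
  have haesm : ∀ k j : ℕ, AEStronglyMeasurable ((A ^ k * D₂ ^ j) f) volume := by
    intro k j
    rw [happ]
    exact aesm_Spow (aesm_Dpow (aesm_Dpow hf h₂ j) h₁ k) h₂ k
  set G₁ := eLpNorm ((D₁ ^ M) f) p volume with hG₁
  set G₂ := eLpNorm ((D₂ ^ M) f) p volume with hG₂
  have hterm : ∀ k ∈ range (2 * M + 1),
      eLpNorm ((A ^ k * D₂ ^ (2 * M - k)) f) p volume ≤ 2 ^ M * (G₁ + G₂) := by
    intro k hk
    have hk2 : k ≤ 2 * M := by simpa [Nat.lt_succ_iff] using hk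
    rcases le_or_gt M k with hMk | hkM
    · -- k ≥ M : route through (D₁ ^ M) f
      have e1 : A ^ k * D₂ ^ (2 * M - k)
          = S ^ k * (D₁ ^ (k - M) * (D₂ ^ (2 * M - k) * D₁ ^ M)) := by
        rw [hA, hcSD₁.mul_pow, (hcD.symm.pow_pow (2 * M - k) M).eq,
          ← mul_assoc (D₁ ^ (k - M)), ← pow_add, Nat.sub_add_cancel hMk, mul_assoc]
      have a1 : AEStronglyMeasurable ((D₁ ^ M) f) volume := aesm_Dpow hf h₁ M
      have a2 : AEStronglyMeasurable ((D₂ ^ (2 * M - k)) ((D₁ ^ M) f)) volume :=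
        aesm_Dpow a1 h₂ _
      have a3 : AEStronglyMeasurable ((D₁ ^ (k - M)) ((D₂ ^ (2 * M - k)) ((D₁ ^ M) f)))
          volume := aesm_Dpow a2 h₁ _
      rw [e1, Module.End.mul_apply, Module.End.mul_apply, Module.End.mul_apply,
        eLpNorm_Spow h₂ k a3 p]
      calc eLpNorm ((D₁ ^ (k - M)) ((D₂ ^ (2 * M - k)) ((D₁ ^ M) f))) p volume
          ≤ 2 ^ (k - M) * eLpNorm ((D₂ ^ (2 * M - k)) ((D₁ ^ M) f)) p volume :=
            eLpNorm_Dpow_le hp a2 h₁ _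
        _ ≤ 2 ^ (k - M) * (2 ^ (2 * M - k) * G₁) :=
            mul_le_mul_right (eLpNorm_Dpow_le hp a1 h₂ _) _
        _ = 2 ^ (k - M + (2 * M - k)) * G₁ := by rw [pow_add, mul_assoc]
        _ = 2 ^ M * G₁ := by
            have : k - M + (2 * M - k) = M := by omega
            rw [this]
        _ ≤ 2 ^ M * (G₁ + G₂) := mul_le_mul_right le_self_add _
    · -- k < M : route through (D₂ ^ M) f
      have hkM' : k ≤ M := hkM.le
      have e1 : A ^ k * D₂ ^ (2 * M - k)
          = S ^ k * (D₁ ^ k * (D₂ ^ (M - k) * D₂ ^ M)) := by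
        have hsplit : 2 * M - k = M - k + M := by omega
        rw [hA, hcSD₁.mul_pow, ← pow_add, ← hsplit, mul_assoc]
      have a1 : AEStronglyMeasurable ((D₂ ^ M) f) volume := aesm_Dpow hf h₂ M
      have a2 : AEStronglyMeasurable ((D₂ ^ (M - k)) ((D₂ ^ M) f)) volume :=
        aesm_Dpow a1 h₂ _
      have a3 : AEStronglyMeasurable ((D₁ ^ k) ((D₂ ^ (M - k)) ((D₂ ^ M) f))) volume :=
        aesm_Dpow a2 h₁ _
      rw [e1, Module.End.mul_apply, Module.End.mul_apply, Module.End.mul_apply,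
        eLpNorm_Spow h₂ k a3 p]
      calc eLpNorm ((D₁ ^ k) ((D₂ ^ (M - k)) ((D₂ ^ M) f))) p volume
          ≤ 2 ^ k * eLpNorm ((D₂ ^ (M - k)) ((D₂ ^ M) f)) p volume :=
            eLpNorm_Dpow_le hp a2 h₁ _
        _ ≤ 2 ^ k * (2 ^ (M - k) * G₂) :=
            mul_le_mul_right (eLpNorm_Dpow_le hp a1 h₂ _) _
        _ = 2 ^ (k + (M - k)) * G₂ := by rw [pow_add, mul_assoc]
        _ = 2 ^ M * G₂ := by
            have : k + (M - k) = M := by omega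
            rw [this]
        _ ≤ 2 ^ M * (G₁ + G₂) := mul_le_mul_right le_add_self _
  -- assemble
  have hgoal1 : eLpNorm (fdiff M h₁ f) p volume = G₁ := by
    rw [fdiff_eq_iter, ← Dpow_apply, hG₁, hD₁]
  have hgoal2 : eLpNorm (fdiff M h₂ f) p volume = G₂ := by
    rw [fdiff_eq_iter, ← Dpow_apply, hG₂, hD₂]
  rw [hgoal1, hgoal2, hfun]
  calc eLpNorm (∑ k ∈ range (2 * M + 1),
          ((2 * M).choose k) • ((A ^ k * D₂ ^ (2 * M - k)) f)) p volume
      ≤ ∑ k ∈ range (2 * M + 1),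
          eLpNorm (((2 * M).choose k) • ((A ^ k * D₂ ^ (2 * M - k)) f)) p volume :=
        eLpNorm_sum_le (fun k _ => (haesm k _).const_smul _) hp
    _ = ∑ k ∈ range (2 * M + 1),
          ((2 * M).choose k : ℝ≥0∞) * eLpNorm ((A ^ k * D₂ ^ (2 * M - k)) f) p volume := by
        refine Finset.sum_congr rfl fun k _ => ?_
        rw [eLpNorm_nsmul]
    _ ≤ ∑ k ∈ range (2 * M + 1), ((2 * M).choose k : ℝ≥0∞) * (2 ^ M * (G₁ + G₂)) := by
        refine Finset.sum_le_sum fun k hk => mul_le_mul_right (hterm k hk) _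
    _ = (∑ k ∈ range (2 * M + 1), ((2 * M).choose k : ℝ≥0∞)) * (2 ^ M * (G₁ + G₂)) := by
        rw [Finset.sum_mul]
    _ = ENNReal.ofReal ((2 : ℝ) ^ (3 * M)) * (G₁ + G₂) := by
        have hsum : (∑ k ∈ range (2 * M + 1), ((2 * M).choose k : ℝ≥0∞))
            = (2 : ℝ≥0∞) ^ (2 * M) := by
          rw [← Nat.cast_sum, Nat.sum_range_choose]
          push_cast
          ring
        have h3 : 2 * M + M = 3 * M := by omega
        rw [hsum, ENNReal.ofReal_pow (by norm_num), ENNReal.ofReal_ofNat, ← mul_assoc,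
          ← pow_add, h3]
end

section
/- Let $M\in\mathbb{N}^*$, $s\in(0,M)$ and $p\in[1,\infty]$. There is a constant $C(s,M)>0$ such that for all $f\in L^p(\mathbb{R}^N)$, $\sup_{h\neq 0}\frac{\|\Delta_h^M f\|_{L^p(\mathbb{R}^N)}}{|h|^s} \leq C(s,M)\,\sup_{h\neq 0}\frac{\|\Delta_h^{2M} f\|_{L^p(\mathbb{R}^N)}}{|h|^s}.$ -/
open MeasureTheory Filter Topology ENNReal Finset

section AuxAlgebra

open Function fwdDiff fwdDiff_aux

variable {A G : Type*} [AddCommMonoid A] [AddCommGroup G]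

lemma my_fwdDiffL_double (h : A) :
    fwdDiffₗ A G (h + h) = fwdDiffₗ A G h ^ 2 + (fwdDiffₗ A G h + fwdDiffₗ A G h) := by
  ext f x
  simp only [LinearMap.add_apply, Pi.add_apply, fwdDiffₗ_apply, pow_two, Module.End.mul_apply,
    fwdDiff, ← add_assoc]
  abel

lemma my_fwdDiff_iter_double (h : A) (f : A → G) (m : ℕ) :
    (fwdDiff (h + h))^[m] f
      = ∑ k ∈ Finset.range (m + 1), (2 ^ (m - k) * m.choose k) • (fwdDiff h)^[m + k] f := by
  have hD : Commute (fwdDiffₗ A G h ^ 2) (fwdDiffₗ A G h + fwdDiffₗ A G h) :=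
    ((Commute.refl _).pow_left 2).add_right ((Commute.refl _).pow_left 2)
  have key := hD.add_pow m
  rw [← my_fwdDiffL_double] at key
  have h0 : (fwdDiff (h + h))^[m] f = ((fwdDiffₗ A G (h + h)) ^ m) f := by
    rw [coe_fwdDiffₗ_pow]
  rw [h0, key, LinearMap.sum_apply]
  refine Finset.sum_congr rfl fun k hk => ?_
  have h1 : fwdDiffₗ A G h + fwdDiffₗ A G h = (2 : ℕ) • fwdDiffₗ A G h := (two_smul ℕ _).symm
  rw [h1, smul_pow, ← pow_mul]
  have h2 : (fwdDiffₗ A G h ^ (2 * k) * (2 ^ (m - k) • fwdDiffₗ A G h ^ (m - k)))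
      = 2 ^ (m - k) • fwdDiffₗ A G h ^ (m + k) := by
    rw [mul_smul_comm, ← pow_add]
    congr 2
    have : k ≤ m := Nat.lt_succ_iff.mp (Finset.mem_range.mp hk)
    omega
  rw [h2, smul_mul_assoc, LinearMap.smul_apply]
  have h3 : ((fwdDiffₗ A G h ^ (m + k) * (m.choose k : Module.End ℤ (A → G)))) f
      = m.choose k • (fwdDiffₗ A G h ^ (m + k)) f := by
    rw [Module.End.mul_apply, Module.End.natCast_apply, map_nsmul]
  rw [h3, smul_smul, coe_fwdDiffₗ_pow]

lemma my_fwdDiff_iter_double' (h : A) (f : A → G) (m : ℕ) :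
    (2 ^ m) • (fwdDiff h)^[m] f
      = (fwdDiff (h + h))^[m] f
        - ∑ k ∈ Finset.range m,
            (2 ^ (m - (k + 1)) * m.choose (k + 1)) • (fwdDiff h)^[m + (k + 1)] f := by
  rw [my_fwdDiff_iter_double, Finset.sum_range_succ']
  simp only [Nat.sub_zero, Nat.choose_zero_right, mul_one, Nat.add_zero]
  abel

end AuxAlgebra

lemma fdiff_eq_fwdDiff {N : ℕ} (M : ℕ) (h : EuclideanSpace ℝ (Fin N))
    (f : EuclideanSpace ℝ (Fin N) → ℝ) : fdiff M h f = (fwdDiff h)^[M] f := by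
  funext x
  rw [fwdDiff_iter_eq_sum_shift]
  refine Finset.sum_congr rfl fun j hj => ?_
  rw [zsmul_eq_mul, ← Nat.cast_smul_eq_nsmul ℝ]
  push_cast
  ring

/-- For `s ∈ (0,M)`, the `M`-th order Besov–Nikol'skii seminorm is controlled by the
`2M`-th order one:
`sup_{h≠0} ‖Δ_h^M f‖_{L^p}/|h|^s ≤ C(s,M) sup_{h≠0} ‖Δ_h^{2M} f‖_{L^p}/|h|^s`. -/
theorem fdiff_M_le_two_M (N M : ℕ) (hM : 1 ≤ M) (s : ℝ) (hs0 : 0 < s) (hsM : s < M) :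
    ∃ C : ℝ, 0 < C ∧ ∀ (p : ℝ≥0∞), 1 ≤ p →
      ∀ (f : EuclideanSpace ℝ (Fin N) → ℝ), MemLp f p volume →
        (⨆ h : {h : EuclideanSpace ℝ (Fin N) // h ≠ 0},
            eLpNorm (fdiff M h.1 f) p volume / ENNReal.ofReal (‖h.1‖ ^ s)) ≤
          ENNReal.ofReal C *
            (⨆ h : {h : EuclideanSpace ℝ (Fin N) // h ≠ 0},
              eLpNorm (fdiff (2 * M) h.1 f) p volume / ENNReal.ofReal (‖h.1‖ ^ s)) := by
  -- ENNReal-valued constants, depending only on `s` and the order `m`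
  have h2ne0 : ∀ m : ℕ, ((2 : ℝ≥0∞) ^ m) ≠ 0 := fun m => pow_ne_zero m (by norm_num)
  have h2netop : ∀ m : ℕ, ((2 : ℝ≥0∞) ^ m) ≠ ∞ := fun m => ENNReal.pow_ne_top (by norm_num)
  set ρ : ℕ → ℝ≥0∞ := fun m => ENNReal.ofReal ((2 : ℝ) ^ s) / 2 ^ m with hρdef
  have hρlt : ∀ m : ℕ, M ≤ m → ρ m < 1 := by
    intro m hm
    have h1 : (2 : ℝ) ^ s < (2 : ℝ) ^ (m : ℕ) := by
      rw [← Real.rpow_natCast 2 m]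
      exact Real.rpow_lt_rpow_of_exponent_lt one_lt_two
        (lt_of_lt_of_le hsM (by exact_mod_cast hm))
    have h2 : ((2 : ℝ≥0∞) ^ m) = ENNReal.ofReal ((2 : ℝ) ^ m) := by
      rw [ENNReal.ofReal_pow (by norm_num)]; norm_num
    rw [hρdef]
    rw [ENNReal.div_lt_iff (Or.inl (h2ne0 m)) (Or.inl (h2netop m)), one_mul, h2]
    exact ENNReal.ofReal_lt_ofReal_iff (by positivity) |>.mpr h1
  set Cm : ℕ → ℝ≥0∞ := fun m =>
    ((m * 4 ^ m : ℕ) : ℝ≥0∞) / 2 ^ m * (1 - ρ m)⁻¹ with hCmdef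
  have hCm_ne_top : ∀ m : ℕ, M ≤ m → Cm m ≠ ∞ := by
    intro m hm
    apply ENNReal.mul_ne_top
    · exact (ENNReal.div_lt_top (by exact ENNReal.natCast_ne_top _) (h2ne0 m)).ne
    · rw [ENNReal.inv_ne_top]
      intro h0
      rw [tsub_eq_zero_iff_le] at h0
      exact absurd h0 (not_le.mpr (hρlt m hm))
  set CC : ℝ≥0∞ := ∏ k ∈ Finset.range M, Cm (M + k) with hCCdef
  have hCC_ne_top : CC ≠ ∞ := by
    rw [hCCdef]
    exact (ENNReal.prod_lt_top fun k _ =>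
      (hCm_ne_top (M + k) (Nat.le_add_right _ _)).lt_top).ne
  refine ⟨CC.toReal + 1, by positivity, ?_⟩
  intro p hp f hf
  simp only [fdiff_eq_fwdDiff]
  -- measurability of iterated differences
  have hsm : ∀ (m : ℕ) (h : EuclideanSpace ℝ (Fin N)),
      AEStronglyMeasurable ((fwdDiff h)^[m] f) volume := by
    intro m
    induction m with
    | zero => intro h; simpa using hf.aestronglyMeasurable
    | succ m ih =>
      intro h
      rw [Function.iterate_succ_apply']
      have h1 : AEStronglyMeasurable (fun x => (fwdDiff h)^[m] f (x + h)) volume :=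
        (ih h).comp_quasiMeasurePreserving
          (measurePreserving_add_right volume h).quasiMeasurePreserving
      exact h1.sub (ih h)
  -- single difference estimate
  have hstep : ∀ (m : ℕ) (h : EuclideanSpace ℝ (Fin N)),
      eLpNorm ((fwdDiff h)^[m + 1] f) p volume
        ≤ 2 * eLpNorm ((fwdDiff h)^[m] f) p volume := by
    intro m h
    rw [Function.iterate_succ_apply']
    have h1 : AEStronglyMeasurable (fun x => (fwdDiff h)^[m] f (x + h)) volume :=
      (hsm m h).comp_quasiMeasurePreserving
        (measurePreserving_add_right volume h).quasiMeasurePreserving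
    have h2 : fwdDiff h ((fwdDiff h)^[m] f)
        = (fun x => (fwdDiff h)^[m] f (x + h)) - (fwdDiff h)^[m] f := rfl
    have h3 : eLpNorm (fun x => (fwdDiff h)^[m] f (x + h)) p volume
        = eLpNorm ((fwdDiff h)^[m] f) p volume :=
      eLpNorm_comp_measurePreserving (hsm m h) (measurePreserving_add_right volume h)
    calc eLpNorm (fwdDiff h ((fwdDiff h)^[m] f)) p volume
        ≤ eLpNorm (fun x => (fwdDiff h)^[m] f (x + h)) p volume
            + eLpNorm ((fwdDiff h)^[m] f) p volume := by
          rw [h2]; exact eLpNorm_sub_le h1 (hsm m h) hp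
      _ = 2 * eLpNorm ((fwdDiff h)^[m] f) p volume := by rw [h3, two_mul]
  -- iterated difference estimate
  have hiter : ∀ (a b : ℕ) (h : EuclideanSpace ℝ (Fin N)),
      eLpNorm ((fwdDiff h)^[a + b] f) p volume
        ≤ 2 ^ a * eLpNorm ((fwdDiff h)^[b] f) p volume := by
    intro a
    induction a with
    | zero => intro b h; simpa using le_refl _
    | succ a ih =>
      intro b h
      have h1 : a + 1 + b = (a + b) + 1 := by omega
      rw [h1]
      calc eLpNorm ((fwdDiff h)^[(a + b) + 1] f) p volume
          ≤ 2 * eLpNorm ((fwdDiff h)^[a + b] f) p volume := hstep _ h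
        _ ≤ 2 * (2 ^ a * eLpNorm ((fwdDiff h)^[b] f) p volume) := by gcongr; exact ih b h
        _ = 2 ^ (a + 1) * eLpNorm ((fwdDiff h)^[b] f) p volume := by ring
  -- uniform bound
  have hubd : ∀ (m : ℕ) (h : EuclideanSpace ℝ (Fin N)),
      eLpNorm ((fwdDiff h)^[m] f) p volume ≤ 2 ^ m * eLpNorm f p volume := by
    intro m h
    simpa using hiter m 0 h
  -- eLpNorm of a natural scalar multiple
  have hnsmul : ∀ (n : ℕ) (g : EuclideanSpace ℝ (Fin N) → ℝ),
      eLpNorm (n • g) p volume = (n : ℝ≥0∞) * eLpNorm g p volume := by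
    intro n g
    rw [← Nat.cast_smul_eq_nsmul ℝ, eLpNorm_const_smul]
    norm_num
  -- the key recursion inequality
  have hrec : ∀ (m : ℕ) (h : EuclideanSpace ℝ (Fin N)),
      (2 : ℝ≥0∞) ^ m * eLpNorm ((fwdDiff h)^[m] f) p volume
        ≤ eLpNorm ((fwdDiff (h + h))^[m] f) p volume
          + ((m * 4 ^ m : ℕ) : ℝ≥0∞) * eLpNorm ((fwdDiff h)^[m + 1] f) p volume := by
    intro m h
    have key := my_fwdDiff_iter_double' h f m
    have hterm_meas : ∀ k, AEStronglyMeasurable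
        ((2 ^ (m - (k + 1)) * m.choose (k + 1)) • (fwdDiff h)^[m + (k + 1)] f) volume := by
      intro k
      rw [← Nat.cast_smul_eq_nsmul ℝ]
      exact (hsm (m + (k + 1)) h).const_smul _
    have hSm : AEStronglyMeasurable (∑ k ∈ Finset.range m,
        (2 ^ (m - (k + 1)) * m.choose (k + 1)) • (fwdDiff h)^[m + (k + 1)] f) volume :=
      by exact Finset.aestronglyMeasurable_sum _ fun k _ => hterm_meas k
    have hterm : ∀ k ∈ Finset.range m,
        eLpNorm ((2 ^ (m - (k + 1)) * m.choose (k + 1)) • (fwdDiff h)^[m + (k + 1)] f) p volume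
          ≤ ((4 ^ m : ℕ) : ℝ≥0∞) * eLpNorm ((fwdDiff h)^[m + 1] f) p volume := by
      intro k hk
      have hkm : k < m := Finset.mem_range.mp hk
      have h1 : eLpNorm ((fwdDiff h)^[m + (k + 1)] f) p volume
          ≤ 2 ^ k * eLpNorm ((fwdDiff h)^[m + 1] f) p volume := by
        rw [show m + (k + 1) = k + (m + 1) from by omega]
        exact hiter k (m + 1) h
      have hnat : 2 ^ (m - (k + 1)) * m.choose (k + 1) * 2 ^ k ≤ 4 ^ m := by
        have hc : m.choose (k + 1) ≤ 2 ^ m := by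
          calc m.choose (k + 1) ≤ ∑ j ∈ Finset.range (m + 1), m.choose j :=
                Finset.single_le_sum (fun i _ => Nat.zero_le _)
                  (Finset.mem_range.mpr (by omega))
            _ = 2 ^ m := Nat.sum_range_choose m
        have hp2 : 2 ^ (m - (k + 1)) * 2 ^ k ≤ 2 ^ m := by
          rw [← pow_add]
          exact Nat.pow_le_pow_right (by norm_num) (by omega)
        calc 2 ^ (m - (k + 1)) * m.choose (k + 1) * 2 ^ k
            = (2 ^ (m - (k + 1)) * 2 ^ k) * m.choose (k + 1) := by ring
          _ ≤ 2 ^ m * 2 ^ m := Nat.mul_le_mul hp2 hc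
          _ = 4 ^ m := by rw [← mul_pow]; norm_num
      calc eLpNorm ((2 ^ (m - (k + 1)) * m.choose (k + 1)) • (fwdDiff h)^[m + (k + 1)] f) p volume
          = ((2 ^ (m - (k + 1)) * m.choose (k + 1) : ℕ) : ℝ≥0∞)
              * eLpNorm ((fwdDiff h)^[m + (k + 1)] f) p volume := hnsmul _ _
        _ ≤ ((2 ^ (m - (k + 1)) * m.choose (k + 1) : ℕ) : ℝ≥0∞)
              * (2 ^ k * eLpNorm ((fwdDiff h)^[m + 1] f) p volume) := by gcongr
        _ = ((2 ^ (m - (k + 1)) * m.choose (k + 1) * 2 ^ k : ℕ) : ℝ≥0∞)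
              * eLpNorm ((fwdDiff h)^[m + 1] f) p volume := by push_cast; ring
        _ ≤ ((4 ^ m : ℕ) : ℝ≥0∞) * eLpNorm ((fwdDiff h)^[m + 1] f) p volume :=
            mul_le_mul_left (by exact_mod_cast hnat) _
    calc (2 : ℝ≥0∞) ^ m * eLpNorm ((fwdDiff h)^[m] f) p volume
        = eLpNorm ((2 ^ m : ℕ) • (fwdDiff h)^[m] f) p volume := by
          rw [hnsmul]; norm_num
      _ = eLpNorm ((fwdDiff (h + h))^[m] f - ∑ k ∈ Finset.range m,
            (2 ^ (m - (k + 1)) * m.choose (k + 1)) • (fwdDiff h)^[m + (k + 1)] f) p volume := by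
          rw [key]
      _ ≤ eLpNorm ((fwdDiff (h + h))^[m] f) p volume
            + eLpNorm (∑ k ∈ Finset.range m,
              (2 ^ (m - (k + 1)) * m.choose (k + 1)) • (fwdDiff h)^[m + (k + 1)] f) p volume :=
          eLpNorm_sub_le (hsm m (h + h)) hSm hp
      _ ≤ eLpNorm ((fwdDiff (h + h))^[m] f) p volume
            + ((m * 4 ^ m : ℕ) : ℝ≥0∞) * eLpNorm ((fwdDiff h)^[m + 1] f) p volume := by
          gcongr
          calc eLpNorm (∑ k ∈ Finset.range m,
              (2 ^ (m - (k + 1)) * m.choose (k + 1)) • (fwdDiff h)^[m + (k + 1)] f) p volume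
              ≤ ∑ k ∈ Finset.range m, eLpNorm
                  ((2 ^ (m - (k + 1)) * m.choose (k + 1)) • (fwdDiff h)^[m + (k + 1)] f)
                  p volume := eLpNorm_sum_le (fun k _ => hterm_meas k) hp
            _ ≤ ∑ _k ∈ Finset.range m,
                  ((4 ^ m : ℕ) : ℝ≥0∞) * eLpNorm ((fwdDiff h)^[m + 1] f) p volume :=
                Finset.sum_le_sum hterm
            _ = ((m * 4 ^ m : ℕ) : ℝ≥0∞) * eLpNorm ((fwdDiff h)^[m + 1] f) p volume := by
                rw [Finset.sum_const, Finset.card_range, nsmul_eq_mul]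
                push_cast
                ring
  -- comparison with the supremum seminorm
  have hofR_ne0 : ∀ (h : EuclideanSpace ℝ (Fin N)), h ≠ 0 →
      ENNReal.ofReal (‖h‖ ^ s) ≠ 0 := by
    intro h hh
    exact (ENNReal.ofReal_pos.mpr (Real.rpow_pos_of_pos (norm_pos_iff.mpr hh) s)).ne'
  have hle_sup : ∀ (m : ℕ) (h : EuclideanSpace ℝ (Fin N)), h ≠ 0 →
      eLpNorm ((fwdDiff h)^[m] f) p volume
        ≤ (⨆ h' : {h' : EuclideanSpace ℝ (Fin N) // h' ≠ 0}, eLpNorm ((fwdDiff h'.1)^[m] f) p volume / ENNReal.ofReal (‖h'.1‖ ^ s)) * ENNReal.ofReal (‖h‖ ^ s) := by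
    intro m h hh
    have h1 : eLpNorm ((fwdDiff h)^[m] f) p volume / ENNReal.ofReal (‖h‖ ^ s)
        ≤ (⨆ h' : {h' : EuclideanSpace ℝ (Fin N) // h' ≠ 0}, eLpNorm ((fwdDiff h'.1)^[m] f) p volume / ENNReal.ofReal (‖h'.1‖ ^ s)) :=
      le_iSup (fun h' : {h' : EuclideanSpace ℝ (Fin N) // h' ≠ 0} =>
        eLpNorm ((fwdDiff h'.1)^[m] f) p volume / ENNReal.ofReal (‖h'.1‖ ^ s)) ⟨h, hh⟩
    rwa [ENNReal.div_le_iff (hofR_ne0 h hh) ENNReal.ofReal_ne_top] at h1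
  -- the Marchaud-type iteration
  have hbound : ∀ (m : ℕ), M ≤ m → ∀ (h : EuclideanSpace ℝ (Fin N)), h ≠ 0 →
      eLpNorm ((fwdDiff h)^[m] f) p volume
        ≤ Cm m * ((⨆ h' : {h' : EuclideanSpace ℝ (Fin N) // h' ≠ 0}, eLpNorm ((fwdDiff h'.1)^[m + 1] f) p volume / ENNReal.ofReal (‖h'.1‖ ^ s)) * ENNReal.ofReal (‖h‖ ^ s)) := by
    intro m hm h hh
    set Amp : ℝ≥0∞ := (⨆ h' : {h' : EuclideanSpace ℝ (Fin N) // h' ≠ 0}, eLpNorm ((fwdDiff h'.1)^[m + 1] f) p volume / ENNReal.ofReal (‖h'.1‖ ^ s)) with hAmp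
    set r : ℝ≥0∞ := ((2 : ℝ≥0∞) ^ m)⁻¹ with hrdef
    set q : ℝ≥0∞ := ENNReal.ofReal ((2 : ℝ) ^ s) with hqdef
    set c : ℝ≥0∞ := ((m * 4 ^ m : ℕ) : ℝ≥0∞) * r * (Amp * ENNReal.ofReal (‖h‖ ^ s)) with hcdef
    set hn : ℕ → EuclideanSpace ℝ (Fin N) := fun n => (2 ^ n : ℝ) • h with hhndef
    have hn0 : ∀ n, hn n ≠ 0 := fun n => smul_ne_zero (by positivity) hh
    have hnadd : ∀ n, hn n + hn n = hn (n + 1) := by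
      intro n
      rw [hhndef]
      simp only
      rw [← add_smul]
      congr 1
      ring
    have hnorm : ∀ n, ENNReal.ofReal (‖hn n‖ ^ s) = q ^ n * ENNReal.ofReal (‖h‖ ^ s) := by
      intro n
      have h1 : ‖hn n‖ = 2 ^ n * ‖h‖ := by
        rw [hhndef]
        simp only [norm_smul, Real.norm_eq_abs]
        rw [abs_of_pos (by positivity)]
      have h2 : ((2 : ℝ) ^ (n : ℕ)) ^ s = ((2 : ℝ) ^ s) ^ (n : ℕ) := by
        rw [← Real.rpow_natCast (2 : ℝ) n, ← Real.rpow_mul (by norm_num), mul_comm,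
          Real.rpow_mul (by norm_num), Real.rpow_natCast]
      rw [h1, Real.mul_rpow (by positivity) (norm_nonneg h), h2,
        ENNReal.ofReal_mul (by positivity), ENNReal.ofReal_pow (by positivity), hqdef]
    have hrecn : ∀ n, eLpNorm ((fwdDiff (hn n))^[m] f) p volume
        ≤ r * eLpNorm ((fwdDiff (hn (n + 1)))^[m] f) p volume + c * q ^ n := by
      intro n
      have h1 := hrec m (hn n)
      rw [hnadd n] at h1
      have h3 := hle_sup (m + 1) (hn n) (hn0 n)
      rw [← hAmp, hnorm n] at h3
      have h2 : eLpNorm ((fwdDiff (hn n))^[m] f) p volume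
          ≤ r * (eLpNorm ((fwdDiff (hn (n + 1)))^[m] f) p volume
              + ((m * 4 ^ m : ℕ) : ℝ≥0∞) * eLpNorm ((fwdDiff (hn n))^[m + 1] f) p volume) := by
        have h4 : eLpNorm ((fwdDiff (hn n))^[m] f) p volume
            = r * ((2 : ℝ≥0∞) ^ m * eLpNorm ((fwdDiff (hn n))^[m] f) p volume) := by
          rw [hrdef, ← mul_assoc, ENNReal.inv_mul_cancel (h2ne0 m) (h2netop m), one_mul]
        rw [h4]
        exact mul_le_mul_right h1 r
      refine h2.trans ?_
      rw [mul_add]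
      refine add_le_add_right ?_ _
      calc r * (((m * 4 ^ m : ℕ) : ℝ≥0∞) * eLpNorm ((fwdDiff (hn n))^[m + 1] f) p volume)
          ≤ r * (((m * 4 ^ m : ℕ) : ℝ≥0∞) * (Amp * (q ^ n * ENNReal.ofReal (‖h‖ ^ s)))) := by
            gcongr
        _ = c * q ^ n := by rw [hcdef]; ring
    have hgeoterm : ∀ n, eLpNorm ((fwdDiff (hn 0))^[m] f) p volume
        ≤ r ^ n * eLpNorm ((fwdDiff (hn n))^[m] f) p volume
          + c * ∑ i ∈ Finset.range n, (r * q) ^ i := by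
      intro n
      induction n with
      | zero => simp
      | succ n ih =>
        calc eLpNorm ((fwdDiff (hn 0))^[m] f) p volume
            ≤ r ^ n * eLpNorm ((fwdDiff (hn n))^[m] f) p volume
              + c * ∑ i ∈ Finset.range n, (r * q) ^ i := ih
          _ ≤ r ^ n * (r * eLpNorm ((fwdDiff (hn (n + 1)))^[m] f) p volume + c * q ^ n)
              + c * ∑ i ∈ Finset.range n, (r * q) ^ i := by
              gcongr
              exact hrecn n
          _ = r ^ (n + 1) * eLpNorm ((fwdDiff (hn (n + 1)))^[m] f) p volume
              + c * ∑ i ∈ Finset.range (n + 1), (r * q) ^ i := by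
              rw [Finset.sum_range_succ, mul_pow]
              ring
    have hrq : r * q = ρ m := by
      rw [hrdef, hqdef, hρdef]
      simp only
      rw [div_eq_mul_inv, mul_comm]
    have hr1 : r < 1 := by
      rw [hrdef, ENNReal.inv_lt_one]
      calc (1 : ℝ≥0∞) < 2 := by norm_num
        _ = 2 ^ 1 := (pow_one 2).symm
        _ ≤ 2 ^ m := pow_le_pow_right₀ (by norm_num) (le_trans hM hm)
    have hFin : (2 : ℝ≥0∞) ^ m * eLpNorm f p volume ≠ ∞ :=
      ENNReal.mul_ne_top (h2netop m) hf.2.ne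
    have hlim : Tendsto (fun n : ℕ => r ^ n * ((2 : ℝ≥0∞) ^ m * eLpNorm f p volume)
        + c * (1 - ρ m)⁻¹) atTop
        (𝓝 (0 * ((2 : ℝ≥0∞) ^ m * eLpNorm f p volume) + c * (1 - ρ m)⁻¹)) :=
      (ENNReal.Tendsto.mul_const (ENNReal.tendsto_pow_atTop_nhds_zero_of_lt_one hr1)
        (Or.inr hFin)).add tendsto_const_nhds
    have hkey : eLpNorm ((fwdDiff h)^[m] f) p volume ≤ c * (1 - ρ m)⁻¹ := by
      have h00 : hn 0 = h := by rw [hhndef]; simp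
      have h01 : eLpNorm ((fwdDiff h)^[m] f) p volume
          ≤ 0 * ((2 : ℝ≥0∞) ^ m * eLpNorm f p volume) + c * (1 - ρ m)⁻¹ := by
        refine ge_of_tendsto' hlim fun n => ?_
        calc eLpNorm ((fwdDiff h)^[m] f) p volume
            = eLpNorm ((fwdDiff (hn 0))^[m] f) p volume := by rw [h00]
          _ ≤ r ^ n * eLpNorm ((fwdDiff (hn n))^[m] f) p volume
              + c * ∑ i ∈ Finset.range n, (r * q) ^ i := hgeoterm n
          _ ≤ r ^ n * ((2 : ℝ≥0∞) ^ m * eLpNorm f p volume) + c * (1 - ρ m)⁻¹ := by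
              gcongr
              · exact hubd m (hn n)
              · exact le_trans (ENNReal.sum_le_tsum _)
                  (by rw [ENNReal.tsum_geometric, hrq])
      simpa using h01
    refine hkey.trans (le_of_eq ?_)
    rw [hcdef]
    simp only [hCmdef, div_eq_mul_inv]
    rw [← hrdef]
    generalize (1 - ρ m)⁻¹ = w
    ring
  -- one step of the chain
  have hAstep : ∀ (m : ℕ), M ≤ m →
      (⨆ h' : {h' : EuclideanSpace ℝ (Fin N) // h' ≠ 0}, eLpNorm ((fwdDiff h'.1)^[m] f) p volume / ENNReal.ofReal (‖h'.1‖ ^ s)) ≤ Cm m * (⨆ h' : {h' : EuclideanSpace ℝ (Fin N) // h' ≠ 0}, eLpNorm ((fwdDiff h'.1)^[m + 1] f) p volume / ENNReal.ofReal (‖h'.1‖ ^ s)) := by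
    intro m hm
    refine iSup_le ?_
    rintro ⟨h, hh⟩
    rw [ENNReal.div_le_iff (hofR_ne0 h hh) ENNReal.ofReal_ne_top]
    calc eLpNorm ((fwdDiff h)^[m] f) p volume
        ≤ Cm m * ((⨆ h' : {h' : EuclideanSpace ℝ (Fin N) // h' ≠ 0}, eLpNorm ((fwdDiff h'.1)^[m + 1] f) p volume / ENNReal.ofReal (‖h'.1‖ ^ s)) * ENNReal.ofReal (‖h‖ ^ s)) := hbound m hm h hh
      _ = Cm m * (⨆ h' : {h' : EuclideanSpace ℝ (Fin N) // h' ≠ 0}, eLpNorm ((fwdDiff h'.1)^[m + 1] f) p volume / ENNReal.ofReal (‖h'.1‖ ^ s)) * ENNReal.ofReal (‖h‖ ^ s) := (mul_assoc _ _ _).symm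
  -- the chain of estimates
  have chain : ∀ i : ℕ, i ≤ M →
      (⨆ h' : {h' : EuclideanSpace ℝ (Fin N) // h' ≠ 0}, eLpNorm ((fwdDiff h'.1)^[M] f) p volume / ENNReal.ofReal (‖h'.1‖ ^ s)) ≤ (∏ k ∈ Finset.range i, Cm (M + k)) * (⨆ h' : {h' : EuclideanSpace ℝ (Fin N) // h' ≠ 0}, eLpNorm ((fwdDiff h'.1)^[M + i] f) p volume / ENNReal.ofReal (‖h'.1‖ ^ s)) := by
    intro i
    induction i with
    | zero => intro _; simpa using le_refl _
    | succ i ih =>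
      intro hi
      have h1 := ih (by omega)
      have h2 := hAstep (M + i) (Nat.le_add_right M i)
      calc (⨆ h' : {h' : EuclideanSpace ℝ (Fin N) // h' ≠ 0}, eLpNorm ((fwdDiff h'.1)^[M] f) p volume / ENNReal.ofReal (‖h'.1‖ ^ s))
          ≤ (∏ k ∈ Finset.range i, Cm (M + k)) * (⨆ h' : {h' : EuclideanSpace ℝ (Fin N) // h' ≠ 0}, eLpNorm ((fwdDiff h'.1)^[M + i] f) p volume / ENNReal.ofReal (‖h'.1‖ ^ s)) := h1
        _ ≤ (∏ k ∈ Finset.range i, Cm (M + k)) * (Cm (M + i) * (⨆ h' : {h' : EuclideanSpace ℝ (Fin N) // h' ≠ 0}, eLpNorm ((fwdDiff h'.1)^[M + i + 1] f) p volume / ENNReal.ofReal (‖h'.1‖ ^ s))) := by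
            exact mul_le_mul_right h2 _
        _ = (∏ k ∈ Finset.range (i + 1), Cm (M + k)) * (⨆ h' : {h' : EuclideanSpace ℝ (Fin N) // h' ≠ 0}, eLpNorm ((fwdDiff h'.1)^[M + (i + 1)] f) p volume / ENNReal.ofReal (‖h'.1‖ ^ s)) := by
            rw [Finset.prod_range_succ]
            exact (mul_assoc _ _ _).symm
  have hfin := chain M le_rfl
  rw [show M + M = 2 * M from by ring] at hfin
  calc (⨆ h' : {h' : EuclideanSpace ℝ (Fin N) // h' ≠ 0}, eLpNorm ((fwdDiff h'.1)^[M] f) p volume / ENNReal.ofReal (‖h'.1‖ ^ s))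
      ≤ CC * (⨆ h' : {h' : EuclideanSpace ℝ (Fin N) // h' ≠ 0}, eLpNorm ((fwdDiff h'.1)^[2 * M] f) p volume / ENNReal.ofReal (‖h'.1‖ ^ s)) := hfin
    _ ≤ ENNReal.ofReal (CC.toReal + 1) * (⨆ h' : {h' : EuclideanSpace ℝ (Fin N) // h' ≠ 0}, eLpNorm ((fwdDiff h'.1)^[2 * M] f) p volume / ENNReal.ofReal (‖h'.1‖ ^ s)) := by
        gcongr
        conv_lhs => rw [← ENNReal.ofReal_toReal hCC_ne_top]
        exact ENNReal.ofReal_le_ofReal (by linarith [ENNReal.toReal_nonneg (a := CC)])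
end

section
/- Let $(u_j)_{j\geq 0}$ be defined by $u_j=k$ if $j=2^k$ for some $k\in\mathbb{N}$ and $u_j=0$ otherwise. Then $(u_j)$ is unbounded, yet $\sup_{\varepsilon>0}\,\varepsilon\sum_{j\geq 0}2^{-j\varepsilon}u_j \leq \frac{2}{e\ln 2}$. -/
open Filter ENNReal

private lemma exp_mul_le (t : ℝ) : Real.exp 1 * t ≤ Real.exp t := by
  have h := Real.add_one_le_exp (t - 1)
  have h2 : Real.exp t = Real.exp 1 * Real.exp (t - 1) := by
    rw [← Real.exp_add]; ring_nf
  rw [h2]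
  have := mul_le_mul_of_nonneg_left (by linarith : t ≤ Real.exp (t - 1))
    (Real.exp_pos 1).le
  linarith

/-- The sequence `u_j = k` if `j = 2^k` and `u_j = 0` otherwise is unbounded, yet
`sup_{ε>0} ε ∑_{j≥0} 2^{-jε} u_j ≤ 2/(e ln 2)`. -/
theorem unbounded_cesaro (u : ℕ → ℝ)
    (hu1 : ∀ k : ℕ, u (2 ^ k) = (k : ℝ))
    (hu2 : ∀ j : ℕ, (∀ k : ℕ, j ≠ 2 ^ k) → u j = 0) :
    ¬ BddAbove (Set.range u) ∧
      ∀ ε : ℝ, 0 < ε →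
        (∑' j : ℕ, ENNReal.ofReal (ε * Real.rpow 2 (-(j : ℝ) * ε) * u j)) ≤
          ENNReal.ofReal (2 / (Real.exp 1 * Real.log 2)) := by
  constructor
  · rintro ⟨M, hM⟩
    obtain ⟨k, hk⟩ := exists_nat_gt M
    have h := hM (Set.mem_range_self (2 ^ k))
    rw [hu1] at h
    linarith
  · intro ε hε
    set c : ℝ := 1 / (Real.exp 1 * Real.log 2) with hc
    have hlog2 : 0 < Real.log 2 := Real.log_pos (by norm_num)
    have hcpos : 0 < c := by positivity
    set F : ℕ → ℝ≥0∞ := fun j => ENNReal.ofReal (ε * Real.rpow 2 (-(j : ℝ) * ε) * u j)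
      with hF
    have hinj : Function.Injective (fun k : ℕ => 2 ^ k) :=
      fun a b h => Nat.pow_right_injective le_rfl h
    have hsupp : Function.support F ⊆ Set.range (fun k : ℕ => 2 ^ k) := by
      intro j hj
      by_contra hjr
      apply hj
      have : u j = 0 := hu2 j (fun k hk => hjr ⟨k, hk.symm⟩)
      simp [hF, this]
    have heq : ∑' j, F j = ∑' k, F (2 ^ k) := (hinj.tsum_eq hsupp).symm
    -- pointwise bound
    have key : ∀ k : ℕ, ε * Real.rpow 2 (-((2 ^ k : ℕ) : ℝ) * ε) * u (2 ^ k)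
        ≤ c * ((k : ℝ) * (1 / 2) ^ k) := by
      intro k
      rw [hu1]
      set x : ℝ := (2 ^ k : ℝ) * ε with hx
      have hxpos : 0 < x := by positivity
      set t : ℝ := x * Real.log 2 with ht
      have htpos : 0 < t := by positivity
      have h2k : (((2 ^ k : ℕ) : ℝ)) = (2 : ℝ) ^ k := by push_cast; ring
      have hrw : Real.rpow 2 (-((2 ^ k : ℕ) : ℝ) * ε) = Real.exp (-t) := by
        show (2:ℝ) ^ (-((2 ^ k : ℕ) : ℝ) * ε) = Real.exp (-t)
        rw [Real.rpow_def_of_pos (by norm_num : (0:ℝ) < 2)]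
        congr 1
        rw [ht, h2k, hx]; ring
      have hbound : Real.exp (-t) ≤ 1 / (Real.exp 1 * t) := by
        rw [Real.exp_neg, inv_eq_one_div]
        exact one_div_le_one_div_of_le (by positivity) (exp_mul_le t)
      have step1 : ε * Real.rpow 2 (-((2 ^ k : ℕ) : ℝ) * ε) * (k : ℝ)
          ≤ ε * (1 / (Real.exp 1 * t)) * (k : ℝ) := by
        rw [hrw]
        apply mul_le_mul_of_nonneg_right _ (Nat.cast_nonneg k)
        exact mul_le_mul_of_nonneg_left hbound hε.le
      refine step1.trans (le_of_eq ?_)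
      rw [hc, ht, hx]
      have h2kne : ((2:ℝ) ^ k) ≠ 0 := by positivity
      field_simp
      have h12 : ((1:ℝ)/2)^k * 2^k = 1 := by rw [← mul_pow]; norm_num
      linear_combination (-(k:ℝ)) * h12
    -- sum of the majorant
    have hgsum : HasSum (fun k : ℕ => c * ((k : ℝ) * (1 / 2) ^ k))
        (2 / (Real.exp 1 * Real.log 2)) := by
      have h := hasSum_coe_mul_geometric_of_norm_lt_one
        (r := (1/2 : ℝ)) (by rw [Real.norm_of_nonneg] <;> norm_num)
      have h2 : ((1:ℝ)/2) / (1 - 1/2) ^ 2 = 2 := by norm_num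
      rw [h2] at h
      have := h.mul_left c
      convert this using 1
      case e'_3 => rfl
      rw [hc]; field_simp
    have hgnonneg : ∀ k : ℕ, 0 ≤ c * ((k : ℝ) * (1 / 2) ^ k) := by
      intro k; positivity
    calc ∑' j, F j = ∑' k, F (2 ^ k) := heq
      _ ≤ ∑' k : ℕ, ENNReal.ofReal (c * ((k : ℝ) * (1 / 2) ^ k)) := by
          apply ENNReal.tsum_le_tsum
          intro k
          exact ENNReal.ofReal_le_ofReal (key k)
      _ = ENNReal.ofReal (2 / (Real.exp 1 * Real.log 2)) := by
          rw [← ENNReal.ofReal_tsum_of_nonneg hgnonneg hgsum.summable, hgsum.tsum_eq]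
end

section
/- Let $s\in(0,1)$, $p\in[1,\infty)$ and let $N_0^{s,p}(\mathbb{R}^N)$ be the set of $f\in L^p(\mathbb{R}^N)$ with $\lim_{|h|\to 0}\|f(\cdot+h)-f\|_{L^p}/|h|^s=0$. Then $N_0^{s,p}(\mathbb{R}^N)$ coincides with the closure of $C_c^\infty(\mathbb{R}^N)$ in the norm $\|f\|_{N^{s,p}}:=\|f\|_{L^p}+\limsup_{|h|\to 0}\|f(\cdot+h)-f\|_{L^p}/|h|^s$. -/
open MeasureTheory Filter Topology ENNReal Metric Set Function
open scoped Pointwise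

lemma eLpNorm_le_of_bound' {α : Type*} [MeasurableSpace α] {μ : Measure α}
    {p : ℝ≥0∞} (hp0 : p ≠ 0) (hpt : p ≠ ⊤)
    {u : α → ℝ} {A : Set α} (hA : MeasurableSet A) (hsupp : Function.support u ⊆ A)
    {C : ℝ} (h0C : 0 ≤ C) (hC : ∀ x, ‖u x‖ ≤ C) :
    eLpNorm u p μ ≤ ENNReal.ofReal C * μ A ^ (1 / p.toReal) := by
  have hmono : ∀ x, ‖u x‖ ≤ ‖A.indicator (fun _ => C) x‖ := by
    intro x
    by_cases hx : x ∈ A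
    · simpa [Set.indicator_of_mem hx, Real.norm_of_nonneg h0C] using hC x
    · have hux : u x = 0 := by
        by_contra h; exact hx (hsupp h)
      simp [hux, Set.indicator_of_notMem hx]
  calc eLpNorm u p μ ≤ eLpNorm (A.indicator fun _ => C) p μ := eLpNorm_mono hmono
  _ = ‖C‖₊ * μ A ^ (1 / p.toReal) := eLpNorm_indicator_const hA hp0 hpt
  _ = ENNReal.ofReal C * μ A ^ (1 / p.toReal) := by
      exact congrArg (· * μ A ^ (1 / p.toReal)) (Real.enorm_eq_ofReal h0C)


lemma limsup_le_of_le_add_tendsto_zero {α : Type*} {F : Filter α} {u v w : α → ℝ≥0∞}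
    (h : ∀ᶠ x in F, u x ≤ v x + w x) (hw : Tendsto w F (𝓝 0)) :
    Filter.limsup u F ≤ Filter.limsup v F := by
  refine ENNReal.le_of_forall_pos_le_add fun ε hε hlt => ?_
  have hε2 : (ε : ℝ≥0∞) / 2 ≠ 0 := by
    simp [ENNReal.div_eq_zero_iff, hε.ne']
  have h1 : ∀ᶠ x in F, w x ≤ (ε : ℝ≥0∞) / 2 :=
    ENNReal.tendsto_nhds_zero.mp hw _ (pos_iff_ne_zero.mpr hε2)
  have h2 : ∀ᶠ x in F, v x < Filter.limsup v F + (ε : ℝ≥0∞) / 2 :=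
    eventually_lt_of_limsup_lt (ENNReal.lt_add_right hlt.ne hε2)
  have h3 : ∀ᶠ x in F, u x ≤ Filter.limsup v F + ε := by
    filter_upwards [h, h1, h2] with x hx h1x h2x
    calc u x ≤ v x + w x := hx
    _ ≤ (Filter.limsup v F + (ε : ℝ≥0∞) / 2) + (ε : ℝ≥0∞) / 2 :=
        add_le_add h2x.le h1x
    _ = Filter.limsup v F + ε := by rw [add_assoc, ENNReal.add_halves]
  exact limsup_le_of_le (by isBoundedDefault) h3

-- helper 3 : the difference quotient of a Lipschitz compactly supported function tends to 0
variable {N : ℕ}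
local notation "E" => EuclideanSpace ℝ (Fin N)

lemma smooth_quot_tendsto {s : ℝ} (hs0 : 0 < s) (hs1 : s < 1)
    {p : ℝ≥0∞} (hp0 : p ≠ 0) (hpt : p ≠ ⊤)
    {φ : EuclideanSpace ℝ (Fin N) → ℝ} (hφ : ContDiff ℝ (⊤ : ℕ∞) φ)
    (hφc : HasCompactSupport φ) :
    Tendsto (fun h : EuclideanSpace ℝ (Fin N) =>
        eLpNorm (fun x => φ (x + h) - φ x) p volume / ENNReal.ofReal (‖h‖ ^ s))
      (𝓝[≠] (0 : EuclideanSpace ℝ (Fin N))) (𝓝 0) := by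
  obtain ⟨L, hL⟩ := hφ.lipschitzWith_of_hasCompactSupport hφc (by simp)
  set K := tsupport φ with hKdef
  set A := K + closedBall (0 : E) 1 with hAdef
  have hAc : IsCompact A := hφc.isCompact.add (isCompact_closedBall 0 1)
  have hAm : MeasurableSet A := hAc.isClosed.measurableSet
  set V := volume A ^ (1 / p.toReal) with hVdef
  have hV : V ≠ ⊤ := by
    exact (ENNReal.rpow_lt_top_of_nonneg (by positivity) hAc.measure_lt_top.ne).ne
  -- the bounding function
  set B : E → ℝ≥0∞ := fun h => ENNReal.ofReal ((L : ℝ) * ‖h‖ ^ ((1 : ℝ) - s)) * V with hBdef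
  have hBt : Tendsto B (𝓝[≠] (0 : E)) (𝓝 0) := by
    have h1 : Tendsto (fun h : E => (L : ℝ) * ‖h‖ ^ ((1 : ℝ) - s)) (𝓝 0) (𝓝 0) := by
      have h2 : Tendsto (fun h : E => ‖h‖) (𝓝 0) (𝓝 0) :=
        continuous_norm.tendsto' 0 0 norm_zero
      have h3 : Tendsto (fun t : ℝ => t ^ ((1 : ℝ) - s)) (𝓝 0) (𝓝 0) := by
        have := (Real.continuousAt_rpow_const 0 ((1 : ℝ) - s) (Or.inr (by linarith))).tendsto
        rwa [Real.zero_rpow (by linarith)] at this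
      have := (h3.comp h2).const_mul (L : ℝ)
      simpa using this
    have := (ENNReal.tendsto_ofReal h1)
    have := ENNReal.Tendsto.mul_const this (Or.inr hV)
    simpa [hBdef] using this.mono_left nhdsWithin_le_nhds
  have hev : ∀ᶠ h in 𝓝[≠] (0 : E),
      eLpNorm (fun x => φ (x + h) - φ x) p volume / ENNReal.ofReal (‖h‖ ^ s) ≤ B h := by
    have h1 : ∀ᶠ h in 𝓝 (0 : E), ‖h‖ ≤ 1 := by
      filter_upwards [Metric.closedBall_mem_nhds (0 : E) one_pos] with h hh
      simpa [mem_closedBall, dist_zero_right] using hh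
    filter_upwards [eventually_nhdsWithin_of_eventually_nhds h1,
      eventually_mem_nhdsWithin] with h hh (hne : h ∈ ({0}ᶜ : Set E))
    have hne' : h ≠ 0 := hne
    have hnorm : 0 < ‖h‖ := norm_pos_iff.mpr hne'
    -- support bound
    have hsupp : Function.support (fun x => φ (x + h) - φ x) ⊆ A := by
      intro x hx
      by_cases hx1 : φ x ≠ 0
      · have : x ∈ K := subset_tsupport φ hx1
        have h0 : (0 : E) ∈ closedBall (0 : E) 1 := mem_closedBall_self zero_le_one
        simpa using Set.add_mem_add this h0
      · push_neg at hx1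
        have hx2 : φ (x + h) ≠ 0 := by
          intro h2; apply hx; simp [h2, hx1]
        have : x + h ∈ K := subset_tsupport φ hx2
        have hmem : x + h + (-h) ∈ A := by
          refine Set.add_mem_add this ?_
          simpa [mem_closedBall, dist_zero_right] using hh
        simpa using hmem
    -- pointwise bound
    have hbd : ∀ x, ‖φ (x + h) - φ x‖ ≤ (L : ℝ) * ‖h‖ := by
      intro x
      have := hL.dist_le_mul (x + h) x
      simpa [dist_eq_norm, add_sub_cancel_left] using this
    have h4 : eLpNorm (fun x => φ (x + h) - φ x) p volume ≤
        ENNReal.ofReal ((L : ℝ) * ‖h‖) * V :=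
      eLpNorm_le_of_bound' hp0 hpt hAm hsupp (by positivity) hbd
    calc eLpNorm (fun x => φ (x + h) - φ x) p volume / ENNReal.ofReal (‖h‖ ^ s)
        ≤ ENNReal.ofReal ((L : ℝ) * ‖h‖) * V / ENNReal.ofReal (‖h‖ ^ s) :=
          ENNReal.div_le_div_right h4 _
    _ = ENNReal.ofReal ((L : ℝ) * ‖h‖) / ENNReal.ofReal (‖h‖ ^ s) * V := by
          rw [div_eq_mul_inv, div_eq_mul_inv, mul_right_comm]
    _ = B h := by
          rw [← ENNReal.ofReal_div_of_pos (Real.rpow_pos_of_pos hnorm s)]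
          congr 1
          rw [mul_div_assoc]
          congr 1
          rw [Real.rpow_sub hnorm, Real.rpow_one]
  exact tendsto_of_tendsto_of_tendsto_of_le_of_le' tendsto_const_nhds hBt
    (Eventually.of_forall fun _ => zero_le) hev

open scoped Convolution

lemma exists_smooth_close {p : ℝ≥0∞} (hp : 1 ≤ p) (hp' : p ≠ ⊤)
    {f : E → ℝ} (hf : MemLp f p volume) {ε : ℝ≥0∞} (hε : ε ≠ 0) :
    ∃ g : E → ℝ, ContDiff ℝ (⊤ : ℕ∞) g ∧ HasCompactSupport g ∧
      eLpNorm (fun x => f x - g x) p volume ≤ ε := by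
  have hp0 : p ≠ 0 := (zero_lt_one.trans_le hp).ne'
  have hε2 : ε / 2 ≠ 0 := by simp [ENNReal.div_eq_zero_iff, hε]
  obtain ⟨g, g_supp, g_close, g_cont, -⟩ :=
    hf.exists_hasCompactSupport_eLpNorm_sub_le hp' hε2
  set A := tsupport g + closedBall (0 : E) 1 with hAdef
  have hAc : IsCompact A := g_supp.isCompact.add (isCompact_closedBall 0 1)
  have hAm : MeasurableSet A := hAc.isClosed.measurableSet
  set V := volume A ^ (1 / p.toReal) with hVdef
  have hV : V ≠ ⊤ :=
    (ENNReal.rpow_lt_top_of_nonneg (by positivity) hAc.measure_lt_top.ne).ne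
  -- choose a positive real ε' with ofReal ε' * V ≤ ε/2
  obtain ⟨ε', hε'pos, hε'le⟩ : ∃ ε' : ℝ, 0 < ε' ∧ ENNReal.ofReal ε' * V ≤ ε / 2 := by
    set c := min (ε / 2 / V) 1 with hcdef
    have hc0 : c ≠ 0 := by
      simp only [hcdef, ne_eq, min_eq_iff, not_or]
      constructor
      · rintro ⟨h1, -⟩
        exact hε2 (by simpa [ENNReal.div_eq_zero_iff, hV] using h1)
      · rintro ⟨h1, -⟩; exact one_ne_zero h1
    have hct : c ≠ ⊤ := by
      simp only [hcdef, ne_eq]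
      exact (min_le_right _ _).trans_lt (by norm_num) |>.ne
    refine ⟨c.toReal, ENNReal.toReal_pos hc0 hct, ?_⟩
    rw [ENNReal.ofReal_toReal hct]
    calc c * V ≤ ε / 2 / V * V := by
          exact mul_le_mul_left (min_le_left _ _) V
    _ = V * (ε / 2 / V) := mul_comm _ _
    _ ≤ ε / 2 := ENNReal.mul_div_le
  -- uniform continuity of g
  have hgu : UniformContinuous g :=
    g_cont.uniformContinuous_of_tendsto_cocompact g_supp.is_zero_at_infty
  obtain ⟨δ, hδ0, hδ⟩ := Metric.uniformContinuous_iff.mp hgu ε' hε'pos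
  set δ' := min δ 1 with hδ'def
  have hδ'0 : 0 < δ' := lt_min hδ0 one_pos
  set φ : ContDiffBump (0 : E) := ⟨δ' / 2, δ', by positivity, by linarith⟩ with hφdef
  set g' : E → ℝ := (φ.normed volume) ⋆[ContinuousLinearMap.lsmul ℝ ℝ, volume] g with hg'def
  have hgint : MeasureTheory.LocallyIntegrable g volume :=
    (g_cont.integrable_of_hasCompactSupport g_supp).locallyIntegrable
  have hg'smooth : ContDiff ℝ (⊤ : ℕ∞) g' :=
    HasCompactSupport.contDiff_convolution_left _ φ.hasCompactSupport_normed
      φ.contDiff_normed hgint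
  have hg'supp : HasCompactSupport g' :=
    HasCompactSupport.convolution _ φ.hasCompactSupport_normed g_supp
  -- pointwise closeness
  have hclose : ∀ x, ‖g x - g' x‖ ≤ ε' := by
    intro x
    have h1 : ∀ y ∈ ball x φ.rOut, dist (g y) (g x) ≤ ε' := by
      intro y hy
      have : dist y x < δ := by
        have : dist y x < δ' := by simpa [mem_ball] using hy
        exact this.trans_le (min_le_left _ _)
      exact (hδ this).le
    have := φ.dist_normed_convolution_le (μ := volume) g_cont.aestronglyMeasurable h1
    rw [← dist_eq_norm, dist_comm]
    exact this
  -- support of the difference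
  have hdsupp : Function.support (fun x => g x - g' x) ⊆ A := by
    intro x hx
    by_cases hx1 : g x ≠ 0
    · have : x ∈ tsupport g := subset_tsupport g hx1
      have h0 : (0 : E) ∈ closedBall (0 : E) 1 := mem_closedBall_self zero_le_one
      simpa using Set.add_mem_add this h0
    · push_neg at hx1
      have hx2 : g' x ≠ 0 := by
        intro h2; apply hx; simp [h2, hx1]
      have : x ∈ Function.support g' := hx2
      have h3 : x ∈ Function.support (φ.normed volume) + Function.support g :=
        support_convolution_subset _ this
      obtain ⟨a, ha, b, hb, rfl⟩ := h3
      have ha' : a ∈ closedBall (0 : E) 1 := by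
        have h1 : a ∈ ball (0 : E) φ.rOut := (φ.support_normed_eq (μ := volume)) ▸ ha
        have h2 : dist a 0 < φ.rOut := mem_ball.mp h1
        have hle : φ.rOut ≤ 1 := min_le_right δ 1
        exact mem_closedBall.mpr (le_of_lt (lt_of_lt_of_le h2 hle))
      have hb' : b ∈ tsupport g := subset_tsupport g hb
      have hmem : b + a ∈ A := Set.add_mem_add hb' ha'
      have heq : a + b = b + a := add_comm a b
      show a + b ∈ A
      rw [heq]; exact hmem
  have hdle : eLpNorm (fun x => g x - g' x) p volume ≤ ε / 2 := by
    refine le_trans (eLpNorm_le_of_bound' hp0 hp' hAm hdsupp hε'pos.le hclose) hε'le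
  refine ⟨g', hg'smooth, hg'supp, ?_⟩
  have hfg : (fun x => f x - g' x) = (f - g) + fun x => g x - g' x := by
    funext x; simp only [Pi.add_apply, Pi.sub_apply]; ring
  have h1 : AEStronglyMeasurable (f - g) volume :=
    hf.aestronglyMeasurable.sub g_cont.aestronglyMeasurable
  have h2 : AEStronglyMeasurable (fun x => g x - g' x) volume :=
    (g_cont.sub (hg'smooth.continuous)).aestronglyMeasurable
  calc eLpNorm (fun x => f x - g' x) p volume
      ≤ eLpNorm (f - g) p volume + eLpNorm (fun x => g x - g' x) p volume := by
        rw [hfg]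
        exact eLpNorm_add_le h1 h2 hp
  _ ≤ ε / 2 + ε / 2 := add_le_add g_close hdle
  _ = ε := ENNReal.add_halves ε

/-- For `s ∈ (0,1)` and `p ∈ [1,∞)`, the space `N_0^{s,p}` of `f ∈ L^p` with
`limsup_{|h|→0} ‖f(·+h)-f‖_{L^p}/|h|^s = 0` coincides with the closure of `C_c^∞(ℝ^N)` in
the norm `‖f‖_{L^p} + limsup_{|h|→0} ‖f(·+h)-f‖_{L^p}/|h|^s`. -/
theorem N0_eq_closure_smooth (N : ℕ) (s : ℝ) (hs0 : 0 < s) (hs1 : s < 1)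
    (p : ℝ≥0∞) (hp : 1 ≤ p) (hp' : p ≠ ⊤)
    (f : EuclideanSpace ℝ (Fin N) → ℝ) (hf : MemLp f p volume) :
    (Filter.limsup
        (fun h : EuclideanSpace ℝ (Fin N) =>
          eLpNorm (fun x => f (x + h) - f x) p volume / ENNReal.ofReal (‖h‖ ^ s))
        (𝓝[≠] (0 : EuclideanSpace ℝ (Fin N))) = 0) ↔
      ∃ fn : ℕ → EuclideanSpace ℝ (Fin N) → ℝ,
        (∀ n, ContDiff ℝ (⊤ : ℕ∞) (fn n) ∧ HasCompactSupport (fn n)) ∧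
        Filter.Tendsto
          (fun n =>
            eLpNorm (fun x => f x - fn n x) p volume +
              Filter.limsup
                (fun h : EuclideanSpace ℝ (Fin N) =>
                  eLpNorm (fun x => (f (x + h) - fn n (x + h)) - (f x - fn n x)) p volume /
                    ENNReal.ofReal (‖h‖ ^ s))
                (𝓝[≠] (0 : EuclideanSpace ℝ (Fin N))))
          atTop (𝓝 0) := by
  have hp0 : p ≠ 0 := (zero_lt_one.trans_le hp).ne'
  have hshift : ∀ u : EuclideanSpace ℝ (Fin N) → ℝ, AEStronglyMeasurable u volume →
      ∀ h : EuclideanSpace ℝ (Fin N), AEStronglyMeasurable (fun x => u (x + h)) volume := fun u hu h => by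
    exact
      hu.comp_measurePreserving (measurePreserving_add_right volume h)
  have hTf : ∀ h : EuclideanSpace ℝ (Fin N), AEStronglyMeasurable (fun x => f (x + h) - f x) volume :=
    fun h => (hshift f hf.aestronglyMeasurable h).sub hf.aestronglyMeasurable
  constructor
  · intro H
    have exn : ∀ n : ℕ, ∃ g : EuclideanSpace ℝ (Fin N) → ℝ, ContDiff ℝ (⊤ : ℕ∞) g ∧ HasCompactSupport g ∧
        eLpNorm (fun x => f x - g x) p volume ≤ ((n : ℝ≥0∞))⁻¹ := fun n =>
      exists_smooth_close hp hp' hf (by simp)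
    choose g hg1 hg2 hg3 using exn
    refine ⟨g, fun n => ⟨hg1 n, hg2 n⟩, ?_⟩
    have hTg : ∀ n (h : EuclideanSpace ℝ (Fin N)), AEStronglyMeasurable (fun x => g n (x + h) - g n x) volume :=
      fun n h => (((hg1 n).continuous.comp (continuous_id.add continuous_const)).sub
        (hg1 n).continuous).aestronglyMeasurable
    have hzero : ∀ n, Filter.limsup
        (fun h : EuclideanSpace ℝ (Fin N) =>
          eLpNorm (fun x => (f (x + h) - g n (x + h)) - (f x - g n x)) p volume /
            ENNReal.ofReal (‖h‖ ^ s)) (𝓝[≠] (0 : EuclideanSpace ℝ (Fin N))) = 0 := by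
      intro n
      have hle : Filter.limsup
          (fun h : EuclideanSpace ℝ (Fin N) =>
            eLpNorm (fun x => (f (x + h) - g n (x + h)) - (f x - g n x)) p volume /
              ENNReal.ofReal (‖h‖ ^ s)) (𝓝[≠] (0 : EuclideanSpace ℝ (Fin N))) ≤
          Filter.limsup (fun h : EuclideanSpace ℝ (Fin N) =>
            eLpNorm (fun x => f (x + h) - f x) p volume /
              ENNReal.ofReal (‖h‖ ^ s)) (𝓝[≠] (0 : EuclideanSpace ℝ (Fin N))) := by
        refine limsup_le_of_le_add_tendsto_zero (Eventually.of_forall fun h => ?_)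
          (smooth_quot_tendsto hs0 hs1 hp0 hp' (hg1 n) (hg2 n))
        have heq : (fun x => (f (x + h) - g n (x + h)) - (f x - g n x)) =
            (fun x => f (x + h) - f x) + fun x => -(g n (x + h) - g n x) := by
          funext x; simp only [Pi.add_apply]; ring
        have htri : eLpNorm (fun x => (f (x + h) - g n (x + h)) - (f x - g n x)) p volume ≤
            eLpNorm (fun x => f (x + h) - f x) p volume +
              eLpNorm (fun x => g n (x + h) - g n x) p volume := by
          rw [heq]
          refine le_trans (eLpNorm_add_le (hTf h) (hTg n h).neg hp) ?_
          have hneg : eLpNorm (fun x => -(g n (x + h) - g n x)) p volume =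
              eLpNorm (fun x => g n (x + h) - g n x) p volume := by
            rw [show (fun x => -(g n (x + h) - g n x)) =
              -(fun x => g n (x + h) - g n x) from rfl, eLpNorm_neg]
          rw [hneg]
        calc eLpNorm (fun x => (f (x + h) - g n (x + h)) - (f x - g n x)) p volume /
              ENNReal.ofReal (‖h‖ ^ s)
            ≤ (eLpNorm (fun x => f (x + h) - f x) p volume +
                eLpNorm (fun x => g n (x + h) - g n x) p volume) /
                ENNReal.ofReal (‖h‖ ^ s) := ENNReal.div_le_div_right htri _
        _ = eLpNorm (fun x => f (x + h) - f x) p volume / ENNReal.ofReal (‖h‖ ^ s) +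
              eLpNorm (fun x => g n (x + h) - g n x) p volume / ENNReal.ofReal (‖h‖ ^ s) :=
            ENNReal.add_div
      rw [H] at hle
      exact le_antisymm hle (zero_le)
    have hrw : (fun n =>
        eLpNorm (fun x => f x - g n x) p volume +
          Filter.limsup (fun h : EuclideanSpace ℝ (Fin N) =>
            eLpNorm (fun x => (f (x + h) - g n (x + h)) - (f x - g n x)) p volume /
              ENNReal.ofReal (‖h‖ ^ s)) (𝓝[≠] (0 : EuclideanSpace ℝ (Fin N)))) =
        fun n => eLpNorm (fun x => f x - g n x) p volume := by
      funext n; rw [hzero n, add_zero]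
    rw [hrw]
    exact tendsto_of_tendsto_of_tendsto_of_le_of_le tendsto_const_nhds
      ENNReal.tendsto_inv_nat_nhds_zero (fun n => zero_le) hg3
  · rintro ⟨fn, hfn, htend⟩
    have hTg : ∀ n (h : EuclideanSpace ℝ (Fin N)), AEStronglyMeasurable (fun x => fn n (x + h) - fn n x) volume :=
      fun n h => (((hfn n).1.continuous.comp (continuous_id.add continuous_const)).sub
        (hfn n).1.continuous).aestronglyMeasurable
    set Ln : ℕ → ℝ≥0∞ := fun n =>
      Filter.limsup (fun h : EuclideanSpace ℝ (Fin N) =>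
        eLpNorm (fun x => (f (x + h) - fn n (x + h)) - (f x - fn n x)) p volume /
          ENNReal.ofReal (‖h‖ ^ s)) (𝓝[≠] (0 : EuclideanSpace ℝ (Fin N))) with hLndef
    have key : ∀ n, Filter.limsup (fun h : EuclideanSpace ℝ (Fin N) =>
        eLpNorm (fun x => f (x + h) - f x) p volume / ENNReal.ofReal (‖h‖ ^ s))
        (𝓝[≠] (0 : EuclideanSpace ℝ (Fin N))) ≤ Ln n := by
      intro n
      refine limsup_le_of_le_add_tendsto_zero (Eventually.of_forall fun h => ?_)
        (smooth_quot_tendsto hs0 hs1 hp0 hp' (hfn n).1 (hfn n).2)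
      have heq : (fun x => f (x + h) - f x) =
          (fun x => (f (x + h) - fn n (x + h)) - (f x - fn n x)) +
            fun x => fn n (x + h) - fn n x := by
        funext x; simp only [Pi.add_apply]; ring
      have hD : AEStronglyMeasurable
          (fun x => (f (x + h) - fn n (x + h)) - (f x - fn n x)) volume := by
        refine AEStronglyMeasurable.sub ?_ ?_
        · exact (hshift f hf.aestronglyMeasurable h).sub
            (((hfn n).1.continuous.comp (continuous_id.add continuous_const)).aestronglyMeasurable)
        · exact hf.aestronglyMeasurable.sub (hfn n).1.continuous.aestronglyMeasurable
      have htri : eLpNorm (fun x => f (x + h) - f x) p volume ≤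
          eLpNorm (fun x => (f (x + h) - fn n (x + h)) - (f x - fn n x)) p volume +
            eLpNorm (fun x => fn n (x + h) - fn n x) p volume := by
        rw [heq]
        exact eLpNorm_add_le hD (hTg n h) hp
      calc eLpNorm (fun x => f (x + h) - f x) p volume / ENNReal.ofReal (‖h‖ ^ s)
          ≤ (eLpNorm (fun x => (f (x + h) - fn n (x + h)) - (f x - fn n x)) p volume +
              eLpNorm (fun x => fn n (x + h) - fn n x) p volume) /
              ENNReal.ofReal (‖h‖ ^ s) := ENNReal.div_le_div_right htri _
      _ = eLpNorm (fun x => (f (x + h) - fn n (x + h)) - (f x - fn n x)) p volume /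
            ENNReal.ofReal (‖h‖ ^ s) +
            eLpNorm (fun x => fn n (x + h) - fn n x) p volume / ENNReal.ofReal (‖h‖ ^ s) :=
          ENNReal.add_div
    have hLn : Tendsto Ln atTop (𝓝 0) := by
      refine tendsto_of_tendsto_of_tendsto_of_le_of_le tendsto_const_nhds htend
        (fun n => zero_le) (fun n => le_add_self)
    have hfinal : Filter.limsup (fun h : EuclideanSpace ℝ (Fin N) =>
        eLpNorm (fun x => f (x + h) - f x) p volume / ENNReal.ofReal (‖h‖ ^ s))
        (𝓝[≠] (0 : EuclideanSpace ℝ (Fin N))) ≤ 0 := ge_of_tendsto' hLn key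
    exact le_antisymm hfinal (zero_le)
end

section
/- Let $s\in(0,1)$, $p\in[1,\infty)$ and $f\in L^p(\mathbb{R}^N)$. Then there exists a sequence $(f_n)\subset C_c^\infty(\mathbb{R}^N)$ with $\|f-f_n\|_{L^p}+\limsup_{|h|\to 0}\|\Delta_h^1(f-f_n)\|_{L^p}/|h|^s\to 0$ if and only if there exists a sequence $(g_n)\subset C_c^\infty(\mathbb{R}^N)$ with $\|f-g_n\|_{L^p}+\sup_{h\neq 0}\|\Delta_h^1(f-g_n)\|_{L^p}/|h|^s\to 0$. -/
open MeasureTheory Filter Topology ENNReal Convolution Metric Function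

namespace ClosureNB

variable {α : Type*} [MeasurableSpace α] {μ : Measure α} {p : ℝ≥0∞}

/-- Jensen-type inequality for probability densities, in `ℝ≥0∞`. -/
lemma jensen_lintegral (w F : α → ℝ≥0∞) (hw : AEMeasurable w μ) (hF : AEMeasurable F μ)
    (hw1 : ∫⁻ y, w y ∂μ = 1) {r : ℝ} (hr : 1 ≤ r) :
    (∫⁻ y, w y * F y ∂μ) ^ r ≤ ∫⁻ y, w y * F y ^ r ∂μ := by
  rcases eq_or_lt_of_le hr with hr1 | hr1
  · simp [← hr1]
  have hr0 : (0:ℝ) < r := lt_trans one_pos hr1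
  set q : ℝ := Real.conjExponent r with hq
  have hqr : q.HolderConjugate r := (Real.HolderConjugate.conjExponent hr1).symm
  have key : ∫⁻ y, w y * F y ∂μ
      ≤ (∫⁻ y, (fun y => w y ^ (1/q)) y ^ q ∂μ) ^ (1/q)
        * (∫⁻ y, (fun y => w y ^ (1/r) * F y) y ^ r ∂μ) ^ (1/r) := by
    have := ENNReal.lintegral_mul_le_Lp_mul_Lq μ hqr
      (f := fun y => w y ^ (1/q)) (g := fun y => w y ^ (1/r) * F y)
      (hw.pow_const _) ((hw.pow_const _).mul hF)
    refine le_trans (le_of_eq ?_) this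
    refine lintegral_congr fun y => ?_
    have : w y ^ (1/q) * w y ^ (1/r) = w y := by
      rw [← ENNReal.rpow_add_of_nonneg _ _ (one_div_nonneg.mpr hqr.pos.le)
        (one_div_nonneg.mpr hr0.le)]
      simp only [one_div]
      rw [hqr.inv_add_inv_eq_one]
      exact ENNReal.rpow_one _
    simp only [Pi.mul_apply]
    rw [← mul_assoc, this]
  have e1 : ∫⁻ y, (fun y => w y ^ (1/q)) y ^ q ∂μ = 1 := by
    rw [← hw1]
    refine lintegral_congr fun y => ?_
    rw [← ENNReal.rpow_mul, one_div, inv_mul_cancel₀ hqr.ne_zero, ENNReal.rpow_one]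
  have e2 : ∫⁻ y, (fun y => w y ^ (1/r) * F y) y ^ r ∂μ = ∫⁻ y, w y * F y ^ r ∂μ := by
    refine lintegral_congr fun y => ?_
    rw [ENNReal.mul_rpow_of_nonneg _ _ hr0.le, ← ENNReal.rpow_mul, one_div,
      inv_mul_cancel₀ hr0.ne', ENNReal.rpow_one]
  rw [e1, e2, ENNReal.one_rpow, one_mul] at key
  calc (∫⁻ y, w y * F y ∂μ) ^ r ≤ ((∫⁻ y, w y * F y ^ r ∂μ) ^ (1/r)) ^ r :=
        ENNReal.rpow_le_rpow key hr0.le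
    _ = ∫⁻ y, w y * F y ^ r ∂μ := by
        rw [← ENNReal.rpow_mul, one_div, inv_mul_cancel₀ hr0.ne', ENNReal.rpow_one]

/-- Generalized Minkowski-type core estimate. -/
lemma minkowski_core [SFinite μ] (w : α → ℝ≥0∞) (V : α → α → ℝ≥0∞)
    (hw : Measurable w) (hV : Measurable (Function.uncurry V))
    (hw1 : ∫⁻ y, w y ∂μ = 1) {r : ℝ} (hr : 1 ≤ r) :
    ∫⁻ x, (∫⁻ y, w y * V x y ∂μ) ^ r ∂μ ≤ ∫⁻ y, w y * ∫⁻ x, V x y ^ r ∂μ ∂μ := by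
  have hr0 : (0:ℝ) < r := lt_of_lt_of_le one_pos hr
  have step1 : ∫⁻ x, (∫⁻ y, w y * V x y ∂μ) ^ r ∂μ
      ≤ ∫⁻ x, ∫⁻ y, w y * V x y ^ r ∂μ ∂μ := by
    refine lintegral_mono fun x => ?_
    exact jensen_lintegral w (fun y => V x y) hw.aemeasurable
      ((hV.comp measurable_prodMk_left).aemeasurable) hw1 hr
  refine step1.trans (le_of_eq ?_)
  have hmeas : AEMeasurable (uncurry fun x y => w y * V x y ^ r) (μ.prod μ) :=
    ((hw.comp measurable_snd).mul (hV.pow_const _)).aemeasurable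
  rw [lintegral_lintegral_swap hmeas]
  refine lintegral_congr fun y => ?_
  rw [lintegral_const_mul]
  exact (hV.comp measurable_prodMk_right).pow_const _

lemma toReal_one_le (hp : 1 ≤ p) (hp' : p ≠ ⊤) : 1 ≤ p.toReal := by
  simpa using ENNReal.toReal_mono hp' hp

lemma eLpNorm_le_of_lintegral (hp : 1 ≤ p) (hp' : p ≠ ⊤) {u : α → ℝ} {C : ℝ≥0∞}
    (h : ∫⁻ x, (‖u x‖₊ : ℝ≥0∞) ^ p.toReal ∂μ ≤ C ^ p.toReal) :
    eLpNorm u p μ ≤ C := by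
  have hr : 1 ≤ p.toReal := toReal_one_le hp hp'
  have hr0 : (0:ℝ) < p.toReal := lt_of_lt_of_le one_pos hr
  rw [eLpNorm_eq_lintegral_rpow_enorm_toReal (by intro h0; simp [h0] at hp) hp']
  calc (∫⁻ x, (‖u x‖₊ : ℝ≥0∞) ^ p.toReal ∂μ) ^ (1 / p.toReal)
      ≤ (C ^ p.toReal) ^ (1 / p.toReal) := ENNReal.rpow_le_rpow h (by positivity)
    _ = C := by rw [← ENNReal.rpow_mul, mul_one_div, div_self hr0.ne', ENNReal.rpow_one]

lemma lintegral_le_of_eLpNorm (hp : 1 ≤ p) (hp' : p ≠ ⊤) {u : α → ℝ} {C : ℝ≥0∞}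
    (h : eLpNorm u p μ ≤ C) :
    ∫⁻ x, (‖u x‖₊ : ℝ≥0∞) ^ p.toReal ∂μ ≤ C ^ p.toReal := by
  have hr : 1 ≤ p.toReal := toReal_one_le hp hp'
  have hr0 : (0:ℝ) < p.toReal := lt_of_lt_of_le one_pos hr
  rw [eLpNorm_eq_lintegral_rpow_enorm_toReal (by intro h0; simp [h0] at hp) hp'] at h
  calc ∫⁻ x, (‖u x‖₊ : ℝ≥0∞) ^ p.toReal ∂μ
      = ((∫⁻ x, (‖u x‖₊ : ℝ≥0∞) ^ p.toReal ∂μ) ^ (1/p.toReal)) ^ p.toReal := by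
        rw [← ENNReal.rpow_mul, one_div, inv_mul_cancel₀ hr0.ne', ENNReal.rpow_one]
    _ ≤ C ^ p.toReal := ENNReal.rpow_le_rpow h hr0.le


variable {N : ℕ} {s : ℝ}

local notation "E" => EuclideanSpace ℝ (Fin N)

lemma eLpNorm_comp_add {u : E → ℝ} (hu : AEStronglyMeasurable u (volume : Measure E))
    (h : E) : eLpNorm (fun x => u (x + h)) p volume = eLpNorm u p volume :=
  eLpNorm_comp_measurePreserving hu (measurePreserving_add_right volume h)

lemma lintegral_comp_sub (F : E → ℝ≥0∞) (hF : Measurable F) (y : E) :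
    ∫⁻ x, F (x - y) ∂(volume : Measure E) = ∫⁻ x, F x ∂volume :=
  (measurePreserving_sub_right volume y).lintegral_comp hF

lemma eLpNorm_delta_le (hp : 1 ≤ p) {u : E → ℝ}
    (hu : AEStronglyMeasurable u (volume : Measure E)) (h : E) :
    eLpNorm (fun x => u (x + h) - u x) p volume ≤ 2 * eLpNorm u p volume := by
  have h1 : AEStronglyMeasurable (fun x => u (x + h)) (volume : Measure E) :=
    hu.comp_measurePreserving (measurePreserving_add_right volume h)
  calc eLpNorm (fun x => u (x + h) - u x) p volume
      ≤ eLpNorm (fun x => u (x + h)) p volume + eLpNorm u p volume :=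
        eLpNorm_sub_le h1 hu hp
    _ = 2 * eLpNorm u p volume := by rw [eLpNorm_comp_add hu, two_mul]

/-- Young's inequality for convolution with a probability density. -/
lemma young (hp : 1 ≤ p) (hp' : p ≠ ⊤) {ψ : E → ℝ} (hψcont : Continuous ψ)
    (hψs : HasCompactSupport ψ) (hψ0 : ∀ x, 0 ≤ ψ x) (hψ1 : ∫ x, ψ x = 1)
    {u : E → ℝ} (hu : Measurable u) :
    eLpNorm (fun x => ∫ y, ψ y • u (x - y)) p volume ≤ eLpNorm u p volume := by
  have hr : 1 ≤ p.toReal := by simpa using ENNReal.toReal_mono hp' hp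
  set r := p.toReal with hrdef
  have hψint : Integrable ψ volume := hψcont.integrable_of_hasCompactSupport hψs
  set w : E → ℝ≥0∞ := fun y => ENNReal.ofReal (ψ y) with hwdef
  have hw : Measurable w := (ENNReal.measurable_ofReal.comp hψcont.measurable)
  have hw1 : ∫⁻ y, w y ∂(volume : Measure E) = 1 := by
    rw [← ofReal_integral_eq_lintegral_ofReal hψint (ae_of_all _ hψ0), hψ1, ENNReal.ofReal_one]
  set V : E → E → ℝ≥0∞ := fun x y => (‖u (x - y)‖₊ : ℝ≥0∞) with hVdef
  have hV : Measurable (Function.uncurry V) :=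
    (hu.comp (measurable_fst.sub measurable_snd)).enorm
  refine eLpNorm_le_of_lintegral hp hp' ?_
  have ptwise : ∀ x : E, (‖∫ y, ψ y • u (x - y)‖₊ : ℝ≥0∞) ≤ ∫⁻ y, w y * V x y := by
    intro x
    refine le_trans (enorm_integral_le_lintegral_enorm _) (le_of_eq ?_)
    refine lintegral_congr fun y => ?_
    rw [enorm_smul, Real.enorm_eq_ofReal (hψ0 y)]; rfl
  calc ∫⁻ x, (‖∫ y, ψ y • u (x - y)‖₊ : ℝ≥0∞) ^ r ∂(volume : Measure E)
      ≤ ∫⁻ x, (∫⁻ y, w y * V x y) ^ r ∂(volume : Measure E) := by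
        refine lintegral_mono fun x => ENNReal.rpow_le_rpow (ptwise x) (by positivity)
    _ ≤ ∫⁻ y, w y * ∫⁻ x, V x y ^ r ∂(volume : Measure E) ∂(volume : Measure E) :=
        minkowski_core w V hw hV hw1 hr
    _ = ∫⁻ y, w y * ∫⁻ x, (‖u x‖₊ : ℝ≥0∞) ^ r ∂(volume : Measure E) ∂(volume : Measure E) := by
        refine lintegral_congr fun y => ?_
        congr 1
        exact lintegral_comp_sub (fun z => (‖u z‖₊ : ℝ≥0∞) ^ r) (hu.enorm.pow_const _) y
    _ = ∫⁻ x, (‖u x‖₊ : ℝ≥0∞) ^ r ∂(volume : Measure E) := by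
        rw [lintegral_mul_const _ hw, hw1, one_mul]
    _ ≤ eLpNorm u p volume ^ r := lintegral_le_of_eLpNorm hp hp' le_rfl

lemma smooth_delta_bound (hp : 1 ≤ p) (hp' : p ≠ ⊤) {φ : E → ℝ}
    (hφ : ContDiff ℝ (⊤ : ℕ∞) φ) (hφc : HasCompactSupport φ) :
    ∃ C : ℝ≥0∞, C ≠ ⊤ ∧ ∀ h : E, ‖h‖ ≤ 1 →
      eLpNorm (fun x => φ (x + h) - φ x) p volume ≤ C * ENNReal.ofReal ‖h‖ := by
  obtain ⟨K, hK⟩ := hφ.lipschitzWith_of_hasCompactSupport hφc (by simp)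
  set S : Set E := cthickening 1 (tsupport φ) with hSdef
  have hScpt : IsCompact S := hφc.cthickening
  have hSfin : volume S ≠ ⊤ := hScpt.measure_lt_top.ne
  refine ⟨(K : ℝ≥0∞) * volume S ^ (1 / p.toReal), ?_, ?_⟩
  · exact ENNReal.mul_ne_top ENNReal.coe_ne_top
      (ENNReal.rpow_ne_top_of_nonneg (by positivity) hSfin)
  intro h hh
  have ptwise : ∀ x : E, ‖φ (x + h) - φ x‖ ≤ ‖S.indicator (fun _ => (K : ℝ) * ‖h‖) x‖ := by
    intro x
    by_cases hx : x ∈ S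
    · rw [Set.indicator_of_mem hx]
      have hd : ‖φ (x + h) - φ x‖ ≤ (K : ℝ) * ‖h‖ := by
        simpa [Real.dist_eq, dist_eq_norm] using hK.dist_le_mul (x + h) x
      calc ‖φ (x + h) - φ x‖ ≤ (K : ℝ) * ‖h‖ := hd
        _ ≤ ‖(K : ℝ) * ‖h‖‖ := le_abs_self _
    · rw [Set.indicator_of_notMem hx]
      have h1 : φ x = 0 := image_eq_zero_of_notMem_tsupport
        (fun hmem => hx (self_subset_cthickening _ hmem))
      have h2 : φ (x + h) = 0 := by
        refine image_eq_zero_of_notMem_tsupport fun hmem => hx ?_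
        refine mem_cthickening_of_dist_le x (x + h) 1 _ hmem ?_
        rw [dist_eq_norm]
        simpa using hh
      simp [h1, h2]
  calc eLpNorm (fun x => φ (x + h) - φ x) p volume
      ≤ eLpNorm (S.indicator fun _ => (K : ℝ) * ‖h‖) p volume := eLpNorm_mono ptwise
    _ ≤ ‖(K : ℝ) * ‖h‖‖₊ * volume S ^ (1 / p.toReal) := eLpNorm_indicator_const_le _ _
    _ = (K : ℝ≥0∞) * volume S ^ (1 / p.toReal) * ENNReal.ofReal ‖h‖ := by
        rw [← enorm_eq_nnnorm, ← ofReal_norm, Real.norm_of_nonneg (by positivity),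
          ENNReal.ofReal_mul (by positivity)]
        rw [ENNReal.ofReal_coe_nnreal]
        ring
  
lemma smooth_quot_tendsto (hs0 : 0 < s) (hs1 : s < 1) (hp : 1 ≤ p) (hp' : p ≠ ⊤) {φ : E → ℝ}
    (hφ : ContDiff ℝ (⊤ : ℕ∞) φ) (hφc : HasCompactSupport φ) :
    Tendsto (fun h : E => eLpNorm (fun x => φ (x + h) - φ x) p volume /
      ENNReal.ofReal (‖h‖ ^ s)) (𝓝[≠] (0 : E)) (𝓝 0) := by
  obtain ⟨C, hC, hCb⟩ := smooth_delta_bound hp hp' hφ hφc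
  have hnorm : Tendsto (fun h : E => ‖h‖) (𝓝[≠] (0 : E)) (𝓝 0) :=
    tendsto_norm_zero.mono_left nhdsWithin_le_nhds
  have haux : Tendsto (fun h : E => C * ENNReal.ofReal (‖h‖ ^ (1 - s))) (𝓝[≠] (0 : E)) (𝓝 0) := by
    have h1 : Tendsto (fun h : E => ‖h‖ ^ (1 - s)) (𝓝[≠] (0 : E)) (𝓝 0) := by
      have := (Real.continuousAt_rpow_const 0 (1 - s) (Or.inr (by linarith))).tendsto
      rw [Real.zero_rpow (by linarith : (0:ℝ) < 1 - s).ne'] at this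
      exact this.comp hnorm
    have h2 : Tendsto (fun h : E => ENNReal.ofReal (‖h‖ ^ (1 - s))) (𝓝[≠] (0 : E)) (𝓝 0) := by
      simpa [Function.comp_def] using (ENNReal.continuous_ofReal.tendsto 0).comp h1
    simpa using ENNReal.Tendsto.const_mul h2 (Or.inr hC)
  refine tendsto_of_tendsto_of_tendsto_of_le_of_le' tendsto_const_nhds haux ?_ ?_
  · exact Eventually.of_forall fun _ => zero_le
  · have hev : ∀ᶠ h : E in 𝓝[≠] (0 : E), ‖h‖ ≤ 1 ∧ h ≠ 0 := by
      filter_upwards [hnorm.eventually (eventually_le_nhds one_pos), self_mem_nhdsWithin]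
        with h h1 h2
      exact ⟨h1, h2⟩
    filter_upwards [hev] with h hh
    obtain ⟨hh1, hh0⟩ := hh
    have hpos : 0 < ‖h‖ := norm_pos_iff.mpr hh0
    calc eLpNorm (fun x => φ (x + h) - φ x) p volume / ENNReal.ofReal (‖h‖ ^ s)
        ≤ C * ENNReal.ofReal ‖h‖ / ENNReal.ofReal (‖h‖ ^ s) :=
          ENNReal.div_le_div_right (hCb h hh1) _
      _ = C * (ENNReal.ofReal ‖h‖ / ENNReal.ofReal (‖h‖ ^ s)) := by
          rw [mul_div_assoc]
      _ = C * ENNReal.ofReal (‖h‖ ^ (1 - s)) := by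
          rw [← ENNReal.ofReal_div_of_pos (Real.rpow_pos_of_pos hpos s)]
          congr 1
          rw [Real.rpow_sub hpos, Real.rpow_one]

set_option maxHeartbeats 1000000 in
lemma approx (hs0 : 0 < s) (hs1 : s < 1) (hp : 1 ≤ p) (hp' : p ≠ ⊤)
    {f : E → ℝ} (hfm : Measurable f) (hf2 : eLpNorm f p volume ≠ ⊤)
    {ε : ℝ≥0∞} (hε0 : 0 < ε) (hε' : ε ≠ ⊤)
    {δ : ℝ} (hδ0 : 0 < δ) (hδ1 : δ ≤ 1)
    (hsmall : ∀ h : E, h ≠ 0 → ‖h‖ ≤ δ →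
      eLpNorm (fun x => f (x + h) - f x) p volume ≤ ε * ENNReal.ofReal (‖h‖ ^ s)) :
    ∃ g : E → ℝ, ContDiff ℝ (⊤ : ℕ∞) g ∧ HasCompactSupport g ∧
      eLpNorm (fun x => f x - g x) p volume ≤ 2 * ε ∧
      ∀ h : E, h ≠ 0 →
        eLpNorm (fun x => (f (x + h) - g (x + h)) - (f x - g x)) p volume
          ≤ 4 * ε * ENNReal.ofReal (‖h‖ ^ s) := by
  have hr : 1 ≤ p.toReal := by simpa using ENNReal.toReal_mono hp' hp
  have hr0 : (0:ℝ) < p.toReal := lt_of_lt_of_le one_pos hr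
  set r := p.toReal with hrdef
  have hp0 : p ≠ 0 := by intro h0; simp [h0] at hp
  have hfaesm : AEStronglyMeasurable f (volume : Measure E) := hfm.aestronglyMeasurable
  have hfmem : MemLp f p (volume : Measure E) := ⟨hfaesm, lt_top_iff_ne_top.mpr hf2⟩
  have hfl : LocallyIntegrable f (volume : Measure E) := hfmem.locallyIntegrable hp
  -- the bump function
  have hδ2 : 0 < δ / 2 := by positivity
  let b : ContDiffBump (0 : E) := ⟨δ/2, δ, hδ2, by linarith⟩
  set ψ : E → ℝ := b.normed volume with hψdef
  have hψcont : Continuous ψ := b.continuous_normed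
  have hψs : HasCompactSupport ψ := b.hasCompactSupport_normed
  have hψ0 : ∀ x, 0 ≤ ψ x := fun x => b.nonneg_normed x
  have hψ1 : ∫ x, ψ x = 1 := b.integral_normed
  have hψsupp : support ψ = ball (0 : E) δ := b.support_normed_eq
  have hψint : Integrable ψ (volume : Measure E) := hψcont.integrable_of_hasCompactSupport hψs
  -- convolution
  set g₀ : E → ℝ := ψ ⋆[ContinuousLinearMap.lsmul ℝ ℝ, volume] f with hg₀def
  have hg₀smooth : ContDiff ℝ (⊤ : ℕ∞) g₀ :=
    hψs.contDiff_convolution_left _ (b.contDiff_normed (n := (⊤:ℕ∞))) hfl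
  have hg₀cont : Continuous g₀ := hg₀smooth.continuous
  have hg₀aesm : AEStronglyMeasurable g₀ (volume : Measure E) := hg₀cont.aestronglyMeasurable
  have hg₀eval : ∀ x, g₀ x = ∫ y, ψ y • f (x - y) := by
    intro x
    simp only [hg₀def, convolution_def, ContinuousLinearMap.lsmul_apply]
  have hCE : ∀ (u : E → ℝ), LocallyIntegrable u (volume : Measure E) →
      ∀ x : E, Integrable (fun y => ψ y • u (x - y)) volume := by
    intro u hu x
    have := (hψs.convolutionExists_left (ContinuousLinearMap.lsmul ℝ ℝ) hψcont hu) x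
    simpa only [ConvolutionExistsAt, ContinuousLinearMap.lsmul_apply] using this
  have hyoung : ∀ (u : E → ℝ), Measurable u →
      eLpNorm (fun x => ∫ y, ψ y • u (x - y)) p volume ≤ eLpNorm u p volume :=
    fun u hu => young hp hp' hψcont hψs hψ0 hψ1 hu
  have hg₀lp : eLpNorm g₀ p volume ≤ eLpNorm f p volume := by
    have h1 := hyoung f hfm
    have h2 : g₀ = fun x => ∫ y, ψ y • f (x - y) := funext hg₀eval
    rw [h2]; exact h1
  set Gp := eLpNorm g₀ p volume with hGpdef
  have hGp : Gp ≠ ⊤ := (lt_of_le_of_lt hg₀lp (lt_top_iff_ne_top.mpr hf2)).ne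
  set X := ENNReal.ofReal (δ ^ s) with hXdef
  have hX1 : X ≤ 1 := by
    rw [hXdef, ← ENNReal.ofReal_one]
    exact ENNReal.ofReal_le_ofReal (Real.rpow_le_one hδ0.le hδ1 hs0.le)
  have hX0 : X ≠ 0 := by
    rw [hXdef]
    exact (ENNReal.ofReal_pos.mpr (Real.rpow_pos_of_pos hδ0 s)).ne'
  -- translates of f
  have htransm : ∀ h : E, Measurable (fun x : E => f (x + h)) :=
    fun h => hfm.comp (measurable_add_const h)
  have hdeltam : ∀ h : E, Measurable (fun x : E => f (x + h) - f x) :=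
    fun h => (htransm h).sub hfm
  have htransmem : ∀ h : E, MemLp (fun x : E => f (x + h)) p volume := by
    intro h
    refine ⟨(htransm h).aestronglyMeasurable, ?_⟩
    rw [eLpNorm_comp_add hfaesm h]
    exact hfmem.2
  -- closeness estimate
  have hclose : eLpNorm (fun x => g₀ x - f x) p volume ≤ ε * X := by
    set w : E → ℝ≥0∞ := fun y => ENNReal.ofReal (ψ y) with hwdef
    have hw : Measurable w := ENNReal.measurable_ofReal.comp hψcont.measurable
    have hw1 : ∫⁻ y, w y ∂(volume : Measure E) = 1 := by
      rw [← ofReal_integral_eq_lintegral_ofReal hψint (ae_of_all _ hψ0), hψ1, ENNReal.ofReal_one]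
    set V : E → E → ℝ≥0∞ := fun x y => (‖f (x - y) - f x‖₊ : ℝ≥0∞) with hVdef
    have hV : Measurable (Function.uncurry V) :=
      ((hfm.comp (measurable_fst.sub measurable_snd)).sub (hfm.comp measurable_fst)).enorm
    have hptw : ∀ x : E, (‖g₀ x - f x‖₊ : ℝ≥0∞) ≤ ∫⁻ y, w y * V x y := by
      intro x
      have h2 : ∫ y : E, ψ y • f x ∂volume = f x := by
        rw [integral_smul_const, hψ1, one_smul]
      have hid : g₀ x - f x = ∫ y, ψ y • (f (x - y) - f x) := by
        have h3 : ∫ y, ψ y • (f (x - y) - f x)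
            = (∫ y, ψ y • f (x - y)) - ∫ y : E, ψ y • f x := by
          rw [← integral_sub (hCE f hfl x) (hψint.smul_const (f x))]
          exact integral_congr_ae (Eventually.of_forall fun y => smul_sub _ _ _)
        rw [h3, h2, hg₀eval x]
      rw [hid]
      refine le_trans (enorm_integral_le_lintegral_enorm _)
        (le_of_eq (lintegral_congr fun y => ?_))
      rw [enorm_smul, Real.enorm_eq_ofReal (hψ0 y)]; rfl
    have hbound : ∀ y : E, w y * (∫⁻ x, V x y ^ r ∂(volume : Measure E))
        ≤ w y * (ε * X) ^ r := by
      intro y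
      by_cases hy0 : ψ y = 0
      · simp [hwdef, hy0]
      · have hyB : y ∈ support ψ := mem_support.mpr hy0
        rw [hψsupp] at hyB
        have hynorm : ‖y‖ < δ := by simpa [mem_ball_zero_iff] using hyB
        refine mul_le_mul_right ?_ _
        by_cases hy : y = 0
        · subst hy
          have : ∀ x : E, V x 0 ^ r = 0 := fun x => by
            simp [hVdef, ENNReal.zero_rpow_of_pos hr0]
          simp only [this, lintegral_zero]
          exact zero_le
        · have hnm : eLpNorm (fun x => f (x + (-y)) - f x) p volume ≤ ε * X := by
            refine le_trans (hsmall (-y) (neg_ne_zero.mpr hy) (by simpa using hynorm.le)) ?_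
            refine mul_le_mul_right (ENNReal.ofReal_le_ofReal ?_) ε
            rw [norm_neg]
            exact Real.rpow_le_rpow (norm_nonneg _) hynorm.le hs0.le
          have hup := lintegral_le_of_eLpNorm hp hp' hnm
          refine le_trans (le_of_eq (lintegral_congr fun x => ?_)) hup
          simp [hVdef, sub_eq_add_neg, hrdef]
    refine eLpNorm_le_of_lintegral hp hp' ?_
    calc ∫⁻ x, (‖g₀ x - f x‖₊ : ℝ≥0∞) ^ r ∂(volume : Measure E)
        ≤ ∫⁻ x, (∫⁻ y, w y * V x y) ^ r ∂(volume : Measure E) :=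
          lintegral_mono fun x => ENNReal.rpow_le_rpow (hptw x) hr0.le
      _ ≤ ∫⁻ y, w y * ∫⁻ x, V x y ^ r ∂(volume : Measure E) ∂(volume : Measure E) :=
          minkowski_core w V hw hV hw1 hr
      _ ≤ ∫⁻ y, w y * (ε * X) ^ r ∂(volume : Measure E) := lintegral_mono hbound
      _ = (ε * X) ^ r := by rw [lintegral_mul_const _ hw, hw1, one_mul]
  -- difference quotient estimate for the convolution
  have hΔg₀ : ∀ h x : E, g₀ (x + h) - g₀ x = ∫ y, ψ y • (f ((x - y) + h) - f (x - y)) := by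
    intro h x
    have hloch : LocallyIntegrable (fun z : E => f (z + h)) volume :=
      (htransmem h).locallyIntegrable hp
    have I1 : Integrable (fun y => ψ y • (fun z : E => f (z + h)) (x - y)) volume := hCE _ hloch x
    have I2 : Integrable (fun y => ψ y • f (x - y)) volume := hCE f hfl x
    have e1 : g₀ (x + h) = ∫ y, ψ y • f ((x - y) + h) := by
      rw [hg₀eval (x + h)]
      simp only [show ∀ y : E, x + h - y = x - y + h from fun y => by abel]
    rw [e1, hg₀eval x, ← integral_sub I1 I2]
    exact integral_congr_ae (Eventually.of_forall fun y => (smul_sub _ _ _).symm)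
  have hΔbound : ∀ h : E, eLpNorm (fun x => g₀ (x + h) - g₀ x) p volume
      ≤ eLpNorm (fun x => f (x + h) - f x) p volume := by
    intro h
    have h1 := hyoung (fun z => f (z + h) - f z) (hdeltam h)
    have h2 : (fun x => g₀ (x + h) - g₀ x)
        = fun x => ∫ y, ψ y • ((fun z => f (z + h) - f z) (x - y)) := by
      funext x
      simpa using hΔg₀ h x
    rw [h2]; exact h1
  -- cutoff function
  let θ : ContDiffBump (0 : E) := ⟨1, 2, one_pos, one_lt_two⟩
  have hθc : HasCompactSupport (θ : E → ℝ) := θ.hasCompactSupport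
  obtain ⟨K, hK⟩ := (θ.contDiff (n := ⊤)).lipschitzWith_of_hasCompactSupport hθc (by simp)
  -- choice of the truncation radius
  obtain ⟨n, hn1, hn2, hn3⟩ : ∃ n : ℕ, 1 ≤ (n:ℝ) ∧
      ENNReal.ofReal (K * (n:ℝ)⁻¹) * Gp ≤ ε ∧
      ∫⁻ x in {x : E | (n:ℝ) ≤ ‖x‖}, (‖g₀ x‖₊ : ℝ≥0∞) ^ r ∂volume ≤ (ε * X) ^ r := by
    have ev1 : ∀ᶠ n : ℕ in atTop, 1 ≤ (n:ℝ) := by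
      filter_upwards [eventually_ge_atTop 1] with n hn
      exact_mod_cast hn
    have ev2 : ∀ᶠ n : ℕ in atTop, ENNReal.ofReal ((K:ℝ) * (n:ℝ)⁻¹) * Gp ≤ ε := by
      have t1 : Tendsto (fun n : ℕ => (K:ℝ) * (n:ℝ)⁻¹) atTop (𝓝 0) := by
        have := (tendsto_inv_atTop_zero.comp (tendsto_natCast_atTop_atTop (R := ℝ))).const_mul (K:ℝ)
        simpa using this
      have t2 : Tendsto (fun n : ℕ => ENNReal.ofReal ((K:ℝ) * (n:ℝ)⁻¹) * Gp) atTop (𝓝 0) := by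
        have t0 : Tendsto (fun n : ℕ => ENNReal.ofReal ((K:ℝ) * (n:ℝ)⁻¹)) atTop (𝓝 0) := by
          simpa [Function.comp_def] using (ENNReal.continuous_ofReal.tendsto 0).comp t1
        simpa using ENNReal.Tendsto.mul_const t0 (Or.inr hGp)
      filter_upwards [t2.eventually_lt_const hε0] with n hn
      exact hn.le
    have ev3 : ∀ᶠ n : ℕ in atTop,
        ∫⁻ x in {x : E | (n:ℝ) ≤ ‖x‖}, (‖g₀ x‖₊ : ℝ≥0∞) ^ r ∂volume ≤ (ε * X) ^ r := by
      set ν := (volume : Measure E).withDensity (fun x : E => (‖g₀ x‖₊ : ℝ≥0∞) ^ r) with hνdef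
      set S : ℕ → Set E := fun n => {x : E | (n:ℝ) ≤ ‖x‖} with hSdef
      have hSm : ∀ n, MeasurableSet (S n) :=
        fun n => (isClosed_le continuous_const continuous_norm).measurableSet
      have happ : ∀ n, ∫⁻ x in S n, (‖g₀ x‖₊ : ℝ≥0∞) ^ r ∂volume = ν (S n) :=
        fun n => (withDensity_apply _ (hSm n)).symm
      have hmono : Antitone S := by
        intro m k hmk x hx
        simp only [hSdef, Set.mem_setOf_eq] at hx ⊢
        exact le_trans (by exact_mod_cast hmk) hx
      have htot : ν Set.univ ≤ Gp ^ r := by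
        rw [hνdef, withDensity_apply _ MeasurableSet.univ, Measure.restrict_univ]
        exact lintegral_le_of_eLpNorm hp hp' le_rfl
      have hfin : ν (S 0) ≠ ⊤ :=
        (lt_of_le_of_lt (measure_mono (Set.subset_univ _))
          (lt_of_le_of_lt htot (lt_top_iff_ne_top.mpr
            (ENNReal.rpow_ne_top_of_nonneg hr0.le hGp)))).ne
      have hiInter : ⋂ n, S n = ∅ := by
        ext x
        simp only [Set.mem_iInter, Set.mem_empty_iff_false, iff_false, not_forall]
        obtain ⟨m, hm⟩ := exists_nat_gt ‖x‖
        exact ⟨m, by simp [hSdef, not_le.mpr hm]⟩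
      have htend : Tendsto (ν ∘ S) atTop (𝓝 0) := by
        have := tendsto_measure_iInter_atTop (μ := ν)
          (fun n => (hSm n).nullMeasurableSet) hmono ⟨0, hfin⟩
        rwa [hiInter, measure_empty] at this
      have hpos : (0:ℝ≥0∞) < (ε * X) ^ r := by
        refine ENNReal.rpow_pos ?_ ?_
        · exact lt_of_le_of_ne (zero_le) (Ne.symm (mul_ne_zero hε0.ne' hX0))
        · exact ENNReal.mul_ne_top hε' (ne_top_of_le_ne_top ENNReal.one_ne_top hX1)
      filter_upwards [htend.eventually_lt_const hpos] with m hm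
      rw [happ m]
      exact hm.le
    exact ((ev1.and (ev2.and ev3)).exists).imp fun n hn => ⟨hn.1, hn.2.1, hn.2.2⟩
  have hnpos : (0:ℝ) < (n:ℝ) := lt_of_lt_of_le one_pos hn1
  set χ : E → ℝ := fun x => θ ((n:ℝ)⁻¹ • x) with hχdef
  have hχ0 : ∀ x, 0 ≤ χ x := fun x => θ.nonneg
  have hχle1 : ∀ x, χ x ≤ 1 := fun x => θ.le_one
  have hχ1 : ∀ x : E, ‖x‖ ≤ (n:ℝ) → χ x = 1 := by
    intro x hx
    refine θ.one_of_mem_closedBall ?_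
    rw [mem_closedBall_zero_iff, norm_smul, norm_inv, Real.norm_natCast]
    rw [inv_mul_le_iff₀ hnpos, mul_one]
    exact hx
  have hχlip : ∀ x y : E, |χ x - χ y| ≤ (K : ℝ) * (n:ℝ)⁻¹ * ‖x - y‖ := by
    intro x y
    have := hK.dist_le_mul ((n:ℝ)⁻¹ • x) ((n:ℝ)⁻¹ • y)
    rw [Real.dist_eq] at this
    refine le_trans this (le_of_eq ?_)
    rw [dist_eq_norm, ← smul_sub, norm_smul, norm_inv, Real.norm_natCast]
    ring
  have hχsmooth : ContDiff ℝ (⊤ : ℕ∞) χ := (θ.contDiff (n := ⊤)).comp (contDiff_const_smul _)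
  have hχsupp : HasCompactSupport χ := hθc.comp_smul (inv_ne_zero hnpos.ne')
  have hχcont : Continuous χ := hχsmooth.continuous
  -- tail estimate
  have htail : eLpNorm (fun x => (1 - χ x) * g₀ x) p volume ≤ ε * X := by
    refine eLpNorm_le_of_lintegral hp hp' ?_
    have hptw : ∀ x : E, (‖(1 - χ x) * g₀ x‖₊ : ℝ≥0∞) ^ r
        ≤ Set.indicator {x : E | (n:ℝ) ≤ ‖x‖} (fun x => (‖g₀ x‖₊ : ℝ≥0∞) ^ r) x := by
      intro x
      by_cases hx : (n:ℝ) ≤ ‖x‖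
      · rw [Set.indicator_of_mem (show x ∈ {x : E | (n:ℝ) ≤ ‖x‖} from hx)]
        refine ENNReal.rpow_le_rpow ?_ hr0.le
        refine ENNReal.coe_le_coe.mpr ?_
        have hb : ‖(1 - χ x) * g₀ x‖ ≤ ‖g₀ x‖ := by
          rw [norm_mul]
          refine mul_le_of_le_one_left (norm_nonneg _) ?_
          rw [Real.norm_eq_abs, abs_le]
          exact ⟨by nlinarith [hχle1 x], by nlinarith [hχ0 x]⟩
        exact_mod_cast hb
      · rw [Set.indicator_of_notMem (show x ∉ {x : E | (n:ℝ) ≤ ‖x‖} from hx)]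
        have hχx : χ x = 1 := hχ1 x (not_le.mp hx).le
        rw [hχx]
        simp [ENNReal.zero_rpow_of_pos hr0]
    calc ∫⁻ x, (‖(1 - χ x) * g₀ x‖₊ : ℝ≥0∞) ^ r ∂(volume : Measure E)
        ≤ ∫⁻ x, Set.indicator {x : E | (n:ℝ) ≤ ‖x‖}
            (fun x => (‖g₀ x‖₊ : ℝ≥0∞) ^ r) x ∂(volume : Measure E) := lintegral_mono hptw
      _ = ∫⁻ x in {x : E | (n:ℝ) ≤ ‖x‖}, (‖g₀ x‖₊ : ℝ≥0∞) ^ r ∂volume :=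
          lintegral_indicator (isClosed_le continuous_const continuous_norm).measurableSet _
      _ ≤ (ε * X) ^ r := hn3
  have hfg₀ : eLpNorm (fun x => f x - g₀ x) p volume ≤ ε * X := by
    have hneg : (fun x : E => f x - g₀ x) = -(fun x : E => g₀ x - f x) := by
      funext x
      simp [neg_sub]
    rw [hneg, eLpNorm_neg]
    exact hclose
  have hfg : eLpNorm (fun x => f x - χ x * g₀ x) p volume ≤ 2 * (ε * X) := by
    have hid : (fun x => f x - χ x * g₀ x) = fun x => (f x - g₀ x) + (1 - χ x) * g₀ x := by
      funext x; ring
    calc eLpNorm (fun x => f x - χ x * g₀ x) p volume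
        ≤ eLpNorm (fun x => f x - g₀ x) p volume
          + eLpNorm (fun x => (1 - χ x) * g₀ x) p volume := by
          rw [hid]
          exact eLpNorm_add_le (hfm.sub hg₀cont.measurable).aestronglyMeasurable
            ((continuous_const.sub hχcont).mul hg₀cont).aestronglyMeasurable hp
      _ ≤ ε * X + ε * X := add_le_add hfg₀ htail
      _ = 2 * (ε * X) := (two_mul _).symm
  -- the approximating function
  refine ⟨fun x => χ x * g₀ x, hχsmooth.mul hg₀smooth, ?_, ?_, ?_⟩
  · exact hχsupp.mul_right
  · -- L^p closeness
    calc eLpNorm (fun x => f x - χ x * g₀ x) p volume ≤ 2 * (ε * X) := hfg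
      _ ≤ 2 * (ε * 1) := mul_le_mul_right (mul_le_mul_right hX1 ε) 2
      _ = 2 * ε := by rw [mul_one]
  · -- seminorm bound
    intro h hne
    have hpos : 0 < ‖h‖ := norm_pos_iff.mpr hne
    set Y := ENNReal.ofReal (‖h‖ ^ s) with hYdef
    by_cases hcase : ‖h‖ ≤ δ
    · -- small increments
      have hnle1 : ‖h‖ ≤ 1 := le_trans hcase hδ1
      set c : ℝ := (K:ℝ) * (n:ℝ)⁻¹ * ‖h‖ with hcdef
      have hc0 : 0 ≤ c := by positivity
      have hid : (fun x : E => (f (x + h) - χ (x + h) * g₀ (x + h)) - (f x - χ x * g₀ x))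
          = fun x => ((f (x + h) - f x) - χ (x + h) * (g₀ (x + h) - g₀ x))
            - g₀ x * (χ (x + h) - χ x) := by
        funext x; ring
      have hχtrans : Continuous fun x : E => χ (x + h) :=
        hχcont.comp (continuous_id.add continuous_const)
      have hg₀trans : Continuous fun x : E => g₀ (x + h) :=
        hg₀cont.comp (continuous_id.add continuous_const)
      have e1 : eLpNorm (fun x => f (x + h) - f x) p volume ≤ ε * Y :=
        hsmall h hne hcase
      have e2 : eLpNorm (fun x => χ (x + h) * (g₀ (x + h) - g₀ x)) p volume ≤ ε * Y := by
        refine le_trans (eLpNorm_mono fun x => ?_) (le_trans (hΔbound h) e1)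
        rw [norm_mul]
        refine mul_le_of_le_one_left (norm_nonneg _) ?_
        rw [Real.norm_eq_abs, abs_le]
        exact ⟨by nlinarith [hχ0 (x + h)], hχle1 (x + h)⟩
      have e3 : eLpNorm (fun x => g₀ x * (χ (x + h) - χ x)) p volume ≤ ε * Y := by
        have hlip : ∀ x : E, |χ (x + h) - χ x| ≤ (K:ℝ) * (n:ℝ)⁻¹ * ‖h‖ := by
          intro x
          have := hχlip (x + h) x
          rwa [add_sub_cancel_left] at this
        have hm1 : eLpNorm (fun x => g₀ x * (χ (x + h) - χ x)) p volume
            ≤ eLpNorm (fun x => c * g₀ x) p volume := by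
          refine eLpNorm_mono fun x => ?_
          rw [norm_mul, norm_mul, Real.norm_eq_abs c, abs_of_nonneg hc0, mul_comm c ‖g₀ x‖]
          exact mul_le_mul_of_nonneg_left (le_trans (hlip x) le_rfl) (norm_nonneg _)
        have hm2 : eLpNorm (fun x => c * g₀ x) p volume = (‖c‖₊ : ℝ≥0∞) * Gp := by
          have h0 : (fun x : E => c * g₀ x) = c • g₀ := rfl
          rw [h0, eLpNorm_const_smul]; rfl
        have hm3 : (‖c‖₊ : ℝ≥0∞) * Gp ≤ ε * Y := by
          have hcoe : (‖c‖₊ : ℝ≥0∞) = ENNReal.ofReal ((K:ℝ) * (n:ℝ)⁻¹) * ENNReal.ofReal ‖h‖ := by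
            rw [← enorm_eq_nnnorm, Real.enorm_eq_ofReal hc0, hcdef,
              ENNReal.ofReal_mul (by positivity : (0:ℝ) ≤ (K:ℝ) * (n:ℝ)⁻¹)]
          have hYle : ENNReal.ofReal ‖h‖ ≤ Y := by
            rw [hYdef]
            refine ENNReal.ofReal_le_ofReal ?_
            nth_rewrite 1 [← Real.rpow_one ‖h‖]
            exact Real.rpow_le_rpow_of_exponent_ge hpos hnle1 hs1.le
          calc (‖c‖₊ : ℝ≥0∞) * Gp
              = ENNReal.ofReal ((K:ℝ) * (n:ℝ)⁻¹) * Gp * ENNReal.ofReal ‖h‖ := by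
                rw [hcoe]; ring
            _ ≤ ε * Y := mul_le_mul' hn2 hYle
        exact le_trans hm1 (le_trans (le_of_eq hm2) hm3)
      calc eLpNorm (fun x => (f (x + h) - χ (x + h) * g₀ (x + h)) - (f x - χ x * g₀ x)) p volume
          = eLpNorm (fun x => ((f (x + h) - f x) - χ (x + h) * (g₀ (x + h) - g₀ x))
              - g₀ x * (χ (x + h) - χ x)) p volume := by rw [hid]
        _ ≤ eLpNorm (fun x => (f (x + h) - f x) - χ (x + h) * (g₀ (x + h) - g₀ x)) p volume
            + eLpNorm (fun x => g₀ x * (χ (x + h) - χ x)) p volume :=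
            eLpNorm_sub_le (((hdeltam h).sub
              (hχtrans.measurable.mul ((hg₀trans.sub hg₀cont).measurable))).aestronglyMeasurable)
              ((hg₀cont.mul (hχtrans.sub hχcont)).aestronglyMeasurable) hp
        _ ≤ (eLpNorm (fun x => f (x + h) - f x) p volume
            + eLpNorm (fun x => χ (x + h) * (g₀ (x + h) - g₀ x)) p volume)
            + eLpNorm (fun x => g₀ x * (χ (x + h) - χ x)) p volume := by
            refine add_le_add_left ?_ _
            exact eLpNorm_sub_le ((hdeltam h).aestronglyMeasurable)
              ((hχtrans.mul (hg₀trans.sub hg₀cont)).aestronglyMeasurable) hp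
        _ ≤ (ε * Y + ε * Y) + ε * Y := add_le_add (add_le_add e1 e2) e3
        _ = 3 * (ε * Y) := by ring
        _ ≤ 4 * (ε * Y) := by
            refine mul_le_mul_left ?_ _
            norm_num
        _ = 4 * ε * Y := by ring
    · -- large increments
      have hdel : δ ≤ ‖h‖ := (not_le.mp hcase).le
      have hXY : X ≤ Y := by
        rw [hXdef, hYdef]
        exact ENNReal.ofReal_le_ofReal (Real.rpow_le_rpow hδ0.le hdel hs0.le)
      calc eLpNorm (fun x => (f (x + h) - χ (x + h) * g₀ (x + h)) - (f x - χ x * g₀ x)) p volume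
          ≤ 2 * eLpNorm (fun x => f x - χ x * g₀ x) p volume :=
            eLpNorm_delta_le hp (hfm.sub (hχcont.mul hg₀cont).measurable).aestronglyMeasurable h
        _ ≤ 2 * (2 * (ε * X)) := mul_le_mul_right hfg 2
        _ = 4 * ε * X := by ring
        _ ≤ 4 * ε * Y := mul_le_mul_right hXY _

lemma small_of_N (hs0 : 0 < s) (hs1 : s < 1) (hp : 1 ≤ p) (hp' : p ≠ ⊤)
    {f : E → ℝ} (hfaesm : AEStronglyMeasurable f (volume : Measure E))
    (fn : ℕ → E → ℝ) (hfn : ∀ n, ContDiff ℝ (⊤ : ℕ∞) (fn n) ∧ HasCompactSupport (fn n))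
    (htend : Tendsto (fun n =>
        eLpNorm (fun x => f x - fn n x) p volume +
          Filter.limsup (fun h : E =>
            eLpNorm (fun x => (f (x + h) - fn n (x + h)) - (f x - fn n x)) p volume /
              ENNReal.ofReal (‖h‖ ^ s)) (𝓝[≠] (0 : E))) atTop (𝓝 0))
    {ε : ℝ≥0∞} (hε : 0 < ε) :
    ∃ δ : ℝ, 0 < δ ∧ δ ≤ 1 ∧ ∀ h : E, h ≠ 0 → ‖h‖ ≤ δ →
      eLpNorm (fun x => f (x + h) - f x) p volume ≤ ε * ENNReal.ofReal (‖h‖ ^ s) := by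
  have hε2 : (0:ℝ≥0∞) < ε / 2 := ENNReal.div_pos hε.ne' ENNReal.ofNat_ne_top
  obtain ⟨n, hn⟩ := (htend.eventually_lt_const hε2).exists
  have hL : Filter.limsup (fun h : E =>
      eLpNorm (fun x => (f (x + h) - fn n (x + h)) - (f x - fn n x)) p volume /
        ENNReal.ofReal (‖h‖ ^ s)) (𝓝[≠] (0 : E)) < ε / 2 :=
    lt_of_le_of_lt le_add_self hn
  have hev1 : ∀ᶠ h : E in 𝓝[≠] (0 : E),
      eLpNorm (fun x => (f (x + h) - fn n (x + h)) - (f x - fn n x)) p volume /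
        ENNReal.ofReal (‖h‖ ^ s) < ε / 2 := eventually_lt_of_limsup_lt hL
  have hev2 : ∀ᶠ h : E in 𝓝[≠] (0 : E),
      eLpNorm (fun x => fn n (x + h) - fn n x) p volume / ENNReal.ofReal (‖h‖ ^ s) < ε / 2 :=
    (smooth_quot_tendsto hs0 hs1 hp hp' (hfn n).1 (hfn n).2).eventually_lt_const hε2
  have hev : ∀ᶠ h : E in 𝓝[≠] (0 : E),
      eLpNorm (fun x => f (x + h) - f x) p volume ≤ ε * ENNReal.ofReal (‖h‖ ^ s) := by
    filter_upwards [hev1, hev2, self_mem_nhdsWithin] with h h1 h2 h0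
    have h0' : h ≠ 0 := h0
    have hDpos : ENNReal.ofReal (‖h‖ ^ s) ≠ 0 :=
      (ENNReal.ofReal_pos.mpr (Real.rpow_pos_of_pos (norm_pos_iff.mpr h0') s)).ne'
    have hDfin : ENNReal.ofReal (‖h‖ ^ s) ≠ ⊤ := ENNReal.ofReal_ne_top
    rw [← ENNReal.div_le_iff hDpos hDfin]
    have htr : AEStronglyMeasurable (fun x : E => f (x + h)) (volume : Measure E) :=
      hfaesm.comp_quasiMeasurePreserving
        (measurePreserving_add_right volume h).quasiMeasurePreserving
    have tri : eLpNorm (fun x => f (x + h) - f x) p volume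
        ≤ eLpNorm (fun x => (f (x + h) - fn n (x + h)) - (f x - fn n x)) p volume
          + eLpNorm (fun x => fn n (x + h) - fn n x) p volume := by
      have hidd : (fun x : E => f (x + h) - f x)
          = fun x => ((f (x + h) - fn n (x + h)) - (f x - fn n x)) + (fn n (x + h) - fn n x) := by
        funext x; ring
      rw [hidd]
      have hcn : Continuous (fn n) := (hfn n).1.continuous
      have hcnt : Continuous fun x : E => fn n (x + h) :=
        hcn.comp (continuous_id.add continuous_const)
      exact eLpNorm_add_le
        ((htr.sub hcnt.aestronglyMeasurable).sub (hfaesm.sub hcn.aestronglyMeasurable))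
        ((hcnt.sub hcn).aestronglyMeasurable) hp
    calc eLpNorm (fun x => f (x + h) - f x) p volume / ENNReal.ofReal (‖h‖ ^ s)
        ≤ (eLpNorm (fun x => (f (x + h) - fn n (x + h)) - (f x - fn n x)) p volume
          + eLpNorm (fun x => fn n (x + h) - fn n x) p volume) / ENNReal.ofReal (‖h‖ ^ s) :=
          ENNReal.div_le_div_right tri _
      _ = eLpNorm (fun x => (f (x + h) - fn n (x + h)) - (f x - fn n x)) p volume /
            ENNReal.ofReal (‖h‖ ^ s)
          + eLpNorm (fun x => fn n (x + h) - fn n x) p volume / ENNReal.ofReal (‖h‖ ^ s) :=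
          ENNReal.add_div
      _ ≤ ε / 2 + ε / 2 := add_le_add h1.le h2.le
      _ = ε := ENNReal.add_halves ε
  rw [eventually_nhdsWithin_iff, Metric.eventually_nhds_iff] at hev
  obtain ⟨δ₀, hδ₀, hδball⟩ := hev
  refine ⟨min 1 (δ₀ / 2), by positivity, min_le_left _ _, ?_⟩
  intro h hne hnorm
  refine hδball ?_ hne
  rw [dist_zero_right]
  calc ‖h‖ ≤ δ₀ / 2 := le_trans hnorm (min_le_right _ _)
    _ < δ₀ := by linarith


end ClosureNB

open ClosureNB in
/-- For `s ∈ (0,1)`, `p ∈ [1,∞)`, a function `f ∈ L^p(ℝ^N)` can be approximated by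
`C_c^∞` functions in the `N^{s,p}` norm (`L^p` norm plus limsup difference-quotient
seminorm) iff it can be approximated by `C_c^∞` functions in the Nikol'skii
`B^s_{p,∞}` norm (`L^p` norm plus supremum difference-quotient seminorm). -/
theorem closure_N_eq_closure_B (N : ℕ) (s : ℝ) (hs0 : 0 < s) (hs1 : s < 1)
    (p : ℝ≥0∞) (hp : 1 ≤ p) (hp' : p ≠ ⊤)
    (f : EuclideanSpace ℝ (Fin N) → ℝ) (hf : MemLp f p volume) :
    (∃ fn : ℕ → EuclideanSpace ℝ (Fin N) → ℝ,
        (∀ n, ContDiff ℝ (⊤ : ℕ∞) (fn n) ∧ HasCompactSupport (fn n)) ∧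
        Filter.Tendsto
          (fun n =>
            eLpNorm (fun x => f x - fn n x) p volume +
              Filter.limsup
                (fun h : EuclideanSpace ℝ (Fin N) =>
                  eLpNorm (fun x => (f (x + h) - fn n (x + h)) - (f x - fn n x)) p volume /
                    ENNReal.ofReal (‖h‖ ^ s))
                (𝓝[≠] (0 : EuclideanSpace ℝ (Fin N))))
          atTop (𝓝 0)) ↔
      (∃ gn : ℕ → EuclideanSpace ℝ (Fin N) → ℝ,
        (∀ n, ContDiff ℝ (⊤ : ℕ∞) (gn n) ∧ HasCompactSupport (gn n)) ∧
        Filter.Tendsto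
          (fun n =>
            eLpNorm (fun x => f x - gn n x) p volume +
              ⨆ h : {h : EuclideanSpace ℝ (Fin N) // h ≠ 0},
                eLpNorm (fun x => (f (x + h.1) - gn n (x + h.1)) - (f x - gn n x)) p volume /
                  ENNReal.ofReal (‖h.1‖ ^ s))
          atTop (𝓝 0)) := by
  constructor
  · rintro ⟨fn, hfn, htend⟩
    have hae : f =ᵐ[volume] hf.aestronglyMeasurable.mk f := hf.aestronglyMeasurable.ae_eq_mk
    set f' : EuclideanSpace ℝ (Fin N) → ℝ := hf.aestronglyMeasurable.mk f with hf'def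
    have hf'm : Measurable f' := hf.aestronglyMeasurable.stronglyMeasurable_mk.measurable
    have haet : ∀ h : EuclideanSpace ℝ (Fin N),
        (fun x => f (x + h)) =ᵐ[volume] fun x => f' (x + h) := fun h =>
      (measurePreserving_add_right volume h).quasiMeasurePreserving.ae_eq_comp hae
    have hf2 : eLpNorm f' p volume ≠ ⊤ := by
      rw [← eLpNorm_congr_ae hae]
      exact hf.2.ne
    have hsmall : ∀ ε : ℝ≥0∞, 0 < ε → ∃ δ : ℝ, 0 < δ ∧ δ ≤ 1 ∧
        ∀ h : EuclideanSpace ℝ (Fin N), h ≠ 0 → ‖h‖ ≤ δ →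
          eLpNorm (fun x => f' (x + h) - f' x) p volume ≤ ε * ENNReal.ofReal (‖h‖ ^ s) := by
      intro ε hε
      obtain ⟨δ, h1, h2, h3⟩ :=
        small_of_N hs0 hs1 hp hp' hf.aestronglyMeasurable fn hfn htend hε
      refine ⟨δ, h1, h2, fun h hne hd => ?_⟩
      exact le_trans (le_of_eq (eLpNorm_congr_ae ((haet h).sub hae).symm)) (h3 h hne hd)
    have hex : ∀ n : ℕ, ∃ g : EuclideanSpace ℝ (Fin N) → ℝ,
        ContDiff ℝ (⊤ : ℕ∞) g ∧ HasCompactSupport g ∧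
        eLpNorm (fun x => f x - g x) p volume ≤ 2 * ((n : ℝ≥0∞) + 1)⁻¹ ∧
        ∀ h : EuclideanSpace ℝ (Fin N), h ≠ 0 →
          eLpNorm (fun x => (f (x + h) - g (x + h)) - (f x - g x)) p volume
            ≤ 4 * ((n : ℝ≥0∞) + 1)⁻¹ * ENNReal.ofReal (‖h‖ ^ s) := by
      intro n
      have hεn0 : (0:ℝ≥0∞) < ((n : ℝ≥0∞) + 1)⁻¹ :=
        ENNReal.inv_pos.mpr (by simp)
      have hεn' : ((n : ℝ≥0∞) + 1)⁻¹ ≠ ⊤ :=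
        ENNReal.inv_ne_top.mpr (by simp)
      obtain ⟨δ, hδ0, hδ1, hδ⟩ := hsmall _ hεn0
      obtain ⟨g, hg1, hg2, hg3, hg4⟩ := approx hs0 hs1 hp hp' hf'm hf2 hεn0 hεn' hδ0 hδ1 hδ
      refine ⟨g, hg1, hg2, ?_, ?_⟩
      · refine le_trans (le_of_eq (eLpNorm_congr_ae (hae.sub (EventuallyEq.refl _ _)))) hg3
      · intro h hne
        refine le_trans (le_of_eq (eLpNorm_congr_ae
          (((haet h).sub (EventuallyEq.refl _ _)).sub (hae.sub (EventuallyEq.refl _ _)))))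
          (hg4 h hne)
    choose gn hg1 hg2 hg3 hg4 using hex
    refine ⟨gn, fun n => ⟨hg1 n, hg2 n⟩, ?_⟩
    have hbound : ∀ n : ℕ, eLpNorm (fun x => f x - gn n x) p volume +
        (⨆ h : {h : EuclideanSpace ℝ (Fin N) // h ≠ 0},
          eLpNorm (fun x => (f (x + h.1) - gn n (x + h.1)) - (f x - gn n x)) p volume /
            ENNReal.ofReal (‖h.1‖ ^ s)) ≤ 6 * ((n : ℝ≥0∞) + 1)⁻¹ := by
      intro n
      have hsup : (⨆ h : {h : EuclideanSpace ℝ (Fin N) // h ≠ 0},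
          eLpNorm (fun x => (f (x + h.1) - gn n (x + h.1)) - (f x - gn n x)) p volume /
            ENNReal.ofReal (‖h.1‖ ^ s)) ≤ 4 * ((n : ℝ≥0∞) + 1)⁻¹ := by
        refine iSup_le fun h => ?_
        have hD0 : ENNReal.ofReal (‖h.1‖ ^ s) ≠ 0 :=
          (ENNReal.ofReal_pos.mpr (Real.rpow_pos_of_pos (norm_pos_iff.mpr h.2) s)).ne'
        rw [ENNReal.div_le_iff hD0 ENNReal.ofReal_ne_top]
        exact hg4 n h.1 h.2
      calc eLpNorm (fun x => f x - gn n x) p volume + _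
          ≤ 2 * ((n : ℝ≥0∞) + 1)⁻¹ + 4 * ((n : ℝ≥0∞) + 1)⁻¹ := add_le_add (hg3 n) hsup
        _ = 6 * ((n : ℝ≥0∞) + 1)⁻¹ := by ring
    have h1 : Tendsto (fun n : ℕ => ((n : ℝ≥0∞) + 1)⁻¹) atTop (𝓝 0) := by
      have h2 := ENNReal.tendsto_inv_nat_nhds_zero.comp (tendsto_add_atTop_nat 1)
      have h3 : (fun n : ℕ => (((n + 1 : ℕ) : ℝ≥0∞))⁻¹) = fun n : ℕ => ((n : ℝ≥0∞) + 1)⁻¹ := by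
        funext n
        push_cast
        rfl
      rwa [← h3]
    have h6 : Tendsto (fun n : ℕ => 6 * ((n : ℝ≥0∞) + 1)⁻¹) atTop (𝓝 0) := by
      simpa using ENNReal.Tendsto.const_mul h1 (Or.inr (by norm_num : (6:ℝ≥0∞) ≠ ⊤))
    exact tendsto_of_tendsto_of_tendsto_of_le_of_le' tendsto_const_nhds h6
      (Eventually.of_forall fun n => zero_le) (Eventually.of_forall hbound)
  · rintro ⟨gn, hgn, htend⟩
    refine ⟨gn, hgn, ?_⟩
    refine tendsto_of_tendsto_of_tendsto_of_le_of_le' tendsto_const_nhds htend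
      (Eventually.of_forall fun n => zero_le) (Eventually.of_forall fun n => ?_)
    refine add_le_add_right ?_ _
    refine limsup_le_of_le (by isBoundedDefault) ?_
    filter_upwards [self_mem_nhdsWithin] with h hh
    exact le_iSup (fun h' : {h' : EuclideanSpace ℝ (Fin N) // h' ≠ 0} =>
      eLpNorm (fun x => (f (x + h'.1) - gn n (x + h'.1)) - (f x - gn n x)) p volume /
        ENNReal.ofReal (‖h'.1‖ ^ s)) ⟨h, hh⟩
end

section
/- Let $\delta>0$ and $g,h:(0,\delta)\to[0,\infty)$ be measurable. Assume $g(t)\leq g(t/2)$ for all $t\in(0,\delta)$ and that $h$ is non-increasing. Then there is a constant $C=C(N)>0$ such that $\delta^{-N}\int_0^\delta t^{N-1}g(t)\,dt\int_0^\delta t^{N-1}h(t)\,dt \leq C\int_0^\delta t^{N-1}g(t)h(t)\,dt.$ -/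
open MeasureTheory Filter Topology ENNReal Set

/-- Bourgain–Brezis–Mironescu improvement of the Chebyshev inequality: if `g(t) ≤ g(t/2)`
on `(0,δ)` and `h` is non-increasing, then
`δ^{-N} ∫₀^δ t^{N-1} g ∫₀^δ t^{N-1} h ≤ C(N) ∫₀^δ t^{N-1} g h`. -/
theorem bbm_chebyshev (N : ℕ) (hN : 1 ≤ N) :
    ∃ C : ℝ, 0 < C ∧ ∀ (δ : ℝ), 0 < δ →
      ∀ g h : ℝ → ℝ, Measurable g → Measurable h →
        (∀ t ∈ Ioo 0 δ, 0 ≤ g t) → (∀ t ∈ Ioo 0 δ, 0 ≤ h t) →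
        (∀ t ∈ Ioo 0 δ, g t ≤ g (t / 2)) → AntitoneOn h (Ioo 0 δ) →
        ENNReal.ofReal (δ ^ (-(N : ℝ))) *
            (∫⁻ t in Ioo (0 : ℝ) δ, ENNReal.ofReal (t ^ (N - 1) * g t)) *
            (∫⁻ t in Ioo (0 : ℝ) δ, ENNReal.ofReal (t ^ (N - 1) * h t)) ≤
          ENNReal.ofReal C *
            ∫⁻ t in Ioo (0 : ℝ) δ, ENNReal.ofReal (t ^ (N - 1) * g t * h t) := by
  refine ⟨2 ^ (N + 2), by positivity, ?_⟩
  intro δ hδ g h hg hh hg0 hh0 hgdy hmono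
  set q : ℝ≥0∞ := 2 ^ N with hqdef
  have hq0 : q ≠ 0 := pow_ne_zero _ two_ne_zero
  have hqtop : q ≠ ∞ := ENNReal.pow_ne_top ENNReal.ofNat_ne_top
  set r : ℝ≥0∞ := q⁻¹ with hrdef
  set I : ℕ → Set ℝ := fun k => Ico (δ / 2 ^ (k + 1)) (δ / 2 ^ k) with hIdef
  -- basic facts about the dyadic intervals
  have hIs : ∀ k, I k ⊆ Ioo 0 δ := by
    intro k t ht
    refine ⟨lt_of_lt_of_le (by positivity) ht.1, lt_of_lt_of_le ht.2 ?_⟩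
    exact div_le_self hδ.le (one_le_pow₀ one_le_two)
  have hIU : (⋃ k, I k) = Ioo 0 δ := by
    refine Subset.antisymm (iUnion_subset hIs) ?_
    intro t ht
    have hex : ∃ k : ℕ, δ / 2 ^ (k + 1) ≤ t := by
      obtain ⟨k, hk⟩ : ∃ k : ℕ, δ / t < 2 ^ k := pow_unbounded_of_one_lt _ one_lt_two
      refine ⟨k, ?_⟩
      rw [div_le_iff₀ (by positivity)]
      have h1 : δ < t * 2 ^ k := by
        rw [div_lt_iff₀ ht.1] at hk; linarith [hk]
      have h2 : (t : ℝ) * 2 ^ k ≤ t * 2 ^ (k + 1) := by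
        have : (2:ℝ) ^ k ≤ 2 ^ (k+1) := by
          apply pow_le_pow_right₀ one_le_two (Nat.le_succ k)
        nlinarith [ht.1]
      linarith
    classical
    refine mem_iUnion.2 ⟨Nat.find hex, Nat.find_spec hex, ?_⟩
    rcases Nat.eq_zero_or_pos (Nat.find hex) with h0 | hpos
    · rw [h0]; simpa using ht.2
    · have := Nat.find_min hex (Nat.sub_lt hpos one_pos)
      push_neg at this
      have heq : Nat.find hex - 1 + 1 = Nat.find hex := Nat.succ_pred_eq_of_pos hpos
      rwa [heq] at this
  have hdisjlt : ∀ k l, k < l → Disjoint (I k) (I l) := by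
    intro k l hkl
    rw [Set.disjoint_left]
    intro t htk htl
    have h1 : δ / 2 ^ l ≤ δ / 2 ^ (k + 1) := by
      gcongr
      · exact one_le_two
      · omega
    exact absurd (htl.2.trans_le (h1.trans htk.1)) (lt_irrefl t)
  have hdisj : Pairwise (Function.onFun Disjoint I) := by
    intro k l hkl
    rcases hkl.lt_or_gt with hc | hc
    · exact hdisjlt k l hc
    · exact (hdisjlt l k hc).symm
  have hsum : ∀ f : ℝ → ℝ≥0∞, (∫⁻ t in Ioo (0:ℝ) δ, f t) = ∑' k, ∫⁻ t in I k, f t := by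
    intro f
    rw [← hIU, lintegral_iUnion (fun k => measurableSet_Ico) hdisj]
  set a : ℕ → ℝ≥0∞ := fun k => ∫⁻ t in I k, ENNReal.ofReal (t ^ (N - 1) * g t) with hadef
  set b : ℕ → ℝ≥0∞ := fun k => ∫⁻ t in I k, ENNReal.ofReal (t ^ (N - 1) * h t) with hbdef
  set c : ℕ → ℝ≥0∞ := fun k => ∫⁻ t in I k, ENNReal.ofReal (t ^ (N - 1) * g t * h t) with hcdef
  have hmem : ∀ j : ℕ, δ / 2 ^ (j + 1) ∈ Ioo (0:ℝ) δ := by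
    intro j
    exact ⟨by positivity, div_lt_self hδ (one_lt_pow₀ (by norm_num : (1:ℝ) < 2) (Nat.succ_ne_zero j))⟩
  -- step estimate on a
  have hstep : ∀ k, a k ≤ q * a (k + 1) := by
    intro k
    have hmeasF : Measurable fun t : ℝ => ENNReal.ofReal (t ^ (N - 1) * g (t / 2)) :=
      ((measurable_id.pow_const (N - 1)).mul (hg.comp (measurable_id.div_const 2))).ennreal_ofReal
    have h1 : a k ≤ ∫⁻ t in I k, ENNReal.ofReal (t ^ (N - 1) * g (t / 2)) := by
      apply setLIntegral_mono hmeasF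
      intro t ht
      exact ENNReal.ofReal_le_ofReal
        (mul_le_mul_of_nonneg_left (hgdy t (hIs k ht)) (pow_nonneg (hIs k ht).1.le _))
    have hpre : (fun u : ℝ => 2 * u) ⁻¹' (I k) = I (k + 1) := by
      show (fun u : ℝ => 2 * u) ⁻¹' Ico (δ / 2 ^ (k + 1)) (δ / 2 ^ k)
          = Ico (δ / 2 ^ (k + 1 + 1)) (δ / 2 ^ (k + 1))
      rw [preimage_const_mul_Ico₀ _ _ (two_pos), div_div, div_div, ← pow_succ, ← pow_succ]
    have h2 := setLIntegral_map (μ := volume)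
      (measurableSet_Ico : MeasurableSet (I k)) hmeasF (measurable_const_mul 2)
    rw [Real.map_volume_mul_left (two_ne_zero), Measure.restrict_smul,
      lintegral_smul_measure, hpre] at h2
    have habs : ENNReal.ofReal |(2:ℝ)⁻¹| = 2⁻¹ := by
      rw [abs_of_pos (by norm_num), ENNReal.ofReal_inv_of_pos two_pos, ENNReal.ofReal_ofNat]
    rw [habs] at h2
    have hmap : (∫⁻ t in I k, ENNReal.ofReal (t ^ (N - 1) * g (t / 2)))
        = 2 * ∫⁻ u in I (k + 1), ENNReal.ofReal ((2 * u) ^ (N - 1) * g (2 * u / 2)) := by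
      rw [← h2, smul_eq_mul, ← mul_assoc, ENNReal.mul_inv_cancel two_ne_zero ENNReal.ofNat_ne_top, one_mul]
    have hval : (∫⁻ u in I (k + 1), ENNReal.ofReal ((2 * u) ^ (N - 1) * g (2 * u / 2)))
        = ENNReal.ofReal (2 ^ (N - 1)) * a (k + 1) := by
      rw [hadef]
      simp only
      rw [← lintegral_const_mul' _ _ ENNReal.ofReal_ne_top]
      congr 1
      funext u
      rw [← ENNReal.ofReal_mul (by positivity)]
      congr 1
      rw [mul_div_cancel_left₀ u (two_ne_zero), mul_pow]
      ring
    have h2pow : (2 : ℝ≥0∞) * ENNReal.ofReal (2 ^ (N - 1)) = q := by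
      rw [ENNReal.ofReal_pow (by norm_num), ENNReal.ofReal_ofNat, hqdef, ← pow_succ']
      congr 1
      omega
    calc a k ≤ ∫⁻ t in I k, ENNReal.ofReal (t ^ (N - 1) * g (t / 2)) := h1
      _ = 2 * ∫⁻ u in I (k + 1), ENNReal.ofReal ((2 * u) ^ (N - 1) * g (2 * u / 2)) := hmap
      _ = 2 * (ENNReal.ofReal (2 ^ (N - 1)) * a (k + 1)) := by rw [hval]
      _ = q * a (k + 1) := by rw [← mul_assoc, h2pow]
  have hiter : ∀ d k, a k ≤ q ^ d * a (k + d) := by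
    intro d
    induction d with
    | zero => intro k; simp
    | succ n ih =>
      intro k
      calc a k ≤ q ^ n * a (k + n) := ih k
        _ ≤ q ^ n * (q * a (k + n + 1)) := mul_le_mul_right (hstep _) _
        _ = q ^ (n + 1) * a (k + (n + 1)) := by rw [pow_succ, ← Nat.add_assoc]; ring
  -- estimate on b
  have hb : ∀ j, b j ≤ ENNReal.ofReal ((δ / 2 ^ j) ^ N * h (δ / 2 ^ (j + 1))) := by
    intro j
    have hj1 : (0:ℝ) < δ / 2 ^ (j + 1) := by positivity
    have hhn : 0 ≤ h (δ / 2 ^ (j + 1)) := hh0 _ (hmem j)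
    calc b j ≤ ∫⁻ _ in I j, ENNReal.ofReal ((δ / 2 ^ j) ^ (N - 1) * h (δ / 2 ^ (j + 1))) := by
          apply setLIntegral_mono measurable_const
          intro t ht
          have ht' := hIs j ht
          apply ENNReal.ofReal_le_ofReal
          exact mul_le_mul (pow_le_pow_left₀ ht'.1.le ht.2.le _)
            (hmono (hmem j) ht' ht.1) (hh0 t ht') (by positivity)
      _ = ENNReal.ofReal ((δ / 2 ^ j) ^ (N - 1) * h (δ / 2 ^ (j + 1))) * volume (I j) :=
          setLIntegral_const _ _
      _ ≤ _ := by
          have hIvol : volume (I j) = ENNReal.ofReal (δ / 2 ^ j - δ / 2 ^ (j + 1)) := by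
            rw [hIdef]; exact Real.volume_Ico
          rw [hIvol, ← ENNReal.ofReal_mul (mul_nonneg (by positivity) hhn)]
          apply ENNReal.ofReal_le_ofReal
          have e2 : (δ / 2 ^ j) ^ (N - 1) * (δ / 2 ^ j) = (δ / 2 ^ j) ^ N := by
            rw [← pow_succ]; congr 1; omega
          calc (δ / 2 ^ j) ^ (N - 1) * h (δ / 2 ^ (j + 1)) * (δ / 2 ^ j - δ / 2 ^ (j + 1))
              ≤ (δ / 2 ^ j) ^ (N - 1) * h (δ / 2 ^ (j + 1)) * (δ / 2 ^ j) :=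
                mul_le_mul_of_nonneg_left (sub_le_self _ hj1.le)
                  (mul_nonneg (by positivity) hhn)
            _ = (δ / 2 ^ j) ^ N * h (δ / 2 ^ (j + 1)) := by rw [← e2]; ring
  -- estimate relating a and c
  have hc : ∀ j k, j < k → ENNReal.ofReal (h (δ / 2 ^ (j + 1))) * a k ≤ c k := by
    intro j k hjk
    rw [hadef, hcdef]
    simp only
    rw [← lintegral_const_mul' _ _ ENNReal.ofReal_ne_top]
    apply setLIntegral_mono (((measurable_id.pow_const _).mul hg).mul hh).ennreal_ofReal
    intro t ht
    have ht' := hIs k ht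
    have htle : t ≤ δ / 2 ^ (j + 1) := by
      refine le_of_lt (lt_of_lt_of_le ht.2 ?_)
      gcongr
      · exact one_le_two
      · omega
    have hth : h (δ / 2 ^ (j + 1)) ≤ h t := hmono ht' (hmem j) htle
    rw [← ENNReal.ofReal_mul (hh0 _ (hmem j))]
    apply ENNReal.ofReal_le_ofReal
    have hgt : 0 ≤ t ^ (N - 1) * g t := mul_nonneg (pow_nonneg ht'.1.le _) (hg0 t ht')
    calc h (δ / 2 ^ (j + 1)) * (t ^ (N - 1) * g t) ≤ h t * (t ^ (N - 1) * g t) :=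
          mul_le_mul_of_nonneg_right hth hgt
      _ = t ^ (N - 1) * g t * h t := by ring
  -- splitting of the ofReal power
  have h2r : ENNReal.ofReal (((2:ℝ)⁻¹) ^ N) = r := by
    rw [ENNReal.ofReal_pow (by norm_num), ENNReal.ofReal_inv_of_pos two_pos, ENNReal.ofReal_ofNat,
      hrdef, hqdef, ENNReal.inv_pow]
  have hsplit : ∀ j : ℕ, ENNReal.ofReal ((δ / 2 ^ j) ^ N) = ENNReal.ofReal (δ ^ N) * r ^ j := by
    intro j
    have e1 : (δ / 2 ^ j) ^ N = δ ^ N * (((2:ℝ)⁻¹) ^ N) ^ j := by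
      rw [div_eq_mul_inv, ← inv_pow, mul_pow, ← pow_mul, ← pow_mul, Nat.mul_comm]
    rw [e1, ENNReal.ofReal_mul (by positivity)]
    congr 1
    rw [ENNReal.ofReal_pow (by positivity), h2r]
  have hqr : ∀ k j : ℕ, k ≤ j → q ^ (j + 1 - k) * r ^ j = q * r ^ k := by
    intro k j hkj
    have e1 : j + 1 - k = (j - k) + 1 := by omega
    rw [e1, pow_succ]
    nth_rewrite 2 [show j = (j - k) + k by omega]
    rw [pow_add]
    calc q ^ (j-k) * q * (r ^ (j-k) * r ^ k) = (q ^ (j-k) * r ^ (j-k)) * (q * r ^ k) := by ring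
      _ = q * r ^ k := by
          rw [hrdef, ← mul_pow, ENNReal.mul_inv_cancel hq0 hqtop, one_pow, one_mul]
  -- the key pairwise estimate
  have hpair : ∀ j k : ℕ, a k * b j ≤
      ENNReal.ofReal (δ ^ N) * q * (r ^ j * c k + r ^ k * c (j + 1)) := by
    intro j k
    have hbj : b j ≤ (ENNReal.ofReal (δ ^ N) * r ^ j) * ENNReal.ofReal (h (δ / 2 ^ (j+1))) := by
      calc b j ≤ ENNReal.ofReal ((δ / 2 ^ j) ^ N * h (δ / 2 ^ (j + 1))) := hb j
        _ = (ENNReal.ofReal (δ ^ N) * r ^ j) * ENNReal.ofReal (h (δ / 2 ^ (j+1))) := by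
            rw [ENNReal.ofReal_mul (by positivity), hsplit]
    rcases lt_or_ge j k with hjk | hkj
    · calc a k * b j ≤ a k * ((ENNReal.ofReal (δ ^ N) * r ^ j) * ENNReal.ofReal (h (δ / 2 ^ (j+1)))) :=
            mul_le_mul_right hbj _
        _ = (ENNReal.ofReal (δ ^ N) * r ^ j) * (ENNReal.ofReal (h (δ / 2 ^ (j+1))) * a k) := by ring
        _ ≤ (ENNReal.ofReal (δ ^ N) * r ^ j) * c k := mul_le_mul_right (hc j k hjk) _
        _ ≤ ENNReal.ofReal (δ ^ N) * q * (r ^ j * c k + r ^ k * c (j + 1)) := by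
            calc (ENNReal.ofReal (δ ^ N) * r ^ j) * c k
                = ENNReal.ofReal (δ ^ N) * 1 * (r ^ j * c k) := by ring
              _ ≤ ENNReal.ofReal (δ ^ N) * q * (r ^ j * c k + r ^ k * c (j + 1)) := by
                  refine mul_le_mul' (mul_le_mul_right ?_ _) le_self_add
                  rw [hqdef]
                  exact one_le_two.trans (le_self_pow₀ one_le_two (by omega))
    · have h1 : a k ≤ q ^ (j + 1 - k) * a (j + 1) := by
        have := hiter (j + 1 - k) k
        rwa [show k + (j + 1 - k) = j + 1 by omega] at this
      calc a k * b j ≤ (q ^ (j + 1 - k) * a (j + 1)) *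
              ((ENNReal.ofReal (δ ^ N) * r ^ j) * ENNReal.ofReal (h (δ / 2 ^ (j+1)))) :=
            mul_le_mul' h1 hbj
        _ = (ENNReal.ofReal (δ ^ N) * (q ^ (j + 1 - k) * r ^ j)) *
              (ENNReal.ofReal (h (δ / 2 ^ (j+1))) * a (j + 1)) := by ring
        _ ≤ (ENNReal.ofReal (δ ^ N) * (q * r ^ k)) * c (j + 1) := by
            rw [hqr k j hkj]
            exact mul_le_mul_right (hc j (j + 1) (Nat.lt_succ_self j)) _
        _ ≤ ENNReal.ofReal (δ ^ N) * q * (r ^ j * c k + r ^ k * c (j + 1)) := by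
            calc ENNReal.ofReal (δ ^ N) * (q * r ^ k) * c (j + 1)
                = ENNReal.ofReal (δ ^ N) * q * (r ^ k * c (j + 1)) := by ring
              _ ≤ _ := mul_le_mul_right le_add_self _
  -- geometric sums
  have hrle : r ≤ 2⁻¹ := by
    rw [hrdef, hqdef]
    apply ENNReal.inv_le_inv.2
    calc (2:ℝ≥0∞) = 2 ^ 1 := (pow_one 2).symm
      _ ≤ 2 ^ N := pow_le_pow_right₀ one_le_two hN
  have hgeom : (∑' n : ℕ, r ^ n) ≤ 2 := by
    calc (∑' n : ℕ, r ^ n) ≤ ∑' n : ℕ, (2⁻¹ : ℝ≥0∞) ^ n :=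
          ENNReal.tsum_le_tsum fun n => pow_le_pow_left₀ zero_le hrle n
      _ = (1 - 2⁻¹)⁻¹ := ENNReal.tsum_geometric _
      _ = 2 := by rw [ENNReal.one_sub_inv_two, inv_inv]
  set S : ℝ≥0∞ := ∑' k, c k with hSdef
  have htail : (∑' j : ℕ, c (j + 1)) ≤ S :=
    tsum_comp_le_tsum_of_injective (add_left_injective 1) c
  -- summing up
  have main : (∑' k, a k) * (∑' j, b j) ≤ ENNReal.ofReal (δ ^ N) * q * 4 * S := by
    rw [← ENNReal.tsum_mul_right]
    simp_rw [← ENNReal.tsum_mul_left]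
    calc (∑' k, ∑' j, a k * b j)
        ≤ ∑' k, ∑' j, ENNReal.ofReal (δ ^ N) * q * (r ^ j * c k + r ^ k * c (j + 1)) :=
          ENNReal.tsum_le_tsum fun k => ENNReal.tsum_le_tsum fun j => hpair j k
      _ = ENNReal.ofReal (δ ^ N) * q * ∑' k, ∑' j, (r ^ j * c k + r ^ k * c (j + 1)) := by
          simp_rw [ENNReal.tsum_mul_left]
      _ ≤ ENNReal.ofReal (δ ^ N) * q * (4 * S) := by
          apply mul_le_mul_right
          calc (∑' k, ∑' j, (r ^ j * c k + r ^ k * c (j + 1)))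
              = ∑' k, ((∑' j : ℕ, r ^ j) * c k + r ^ k * ∑' j, c (j + 1)) := by
                congr 1; funext k
                rw [ENNReal.tsum_add, ENNReal.tsum_mul_right, ENNReal.tsum_mul_left]
            _ ≤ ∑' k, (2 * c k + r ^ k * S) := by
                apply ENNReal.tsum_le_tsum
                intro k
                exact add_le_add (mul_le_mul_left hgeom _) (mul_le_mul_right htail _)
            _ = 2 * S + (∑' k : ℕ, r ^ k) * S := by
                rw [ENNReal.tsum_add, ENNReal.tsum_mul_left, ENNReal.tsum_mul_right]
            _ ≤ 2 * S + 2 * S := by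
                exact add_le_add_right (mul_le_mul_left hgeom _) _
            _ = 4 * S := by ring
      _ = ENNReal.ofReal (δ ^ N) * q * 4 * S := by ring
  -- conclude
  have hA := hsum (fun t => ENNReal.ofReal (t ^ (N - 1) * g t))
  have hB := hsum (fun t => ENNReal.ofReal (t ^ (N - 1) * h t))
  have hC := hsum (fun t => ENNReal.ofReal (t ^ (N - 1) * g t * h t))
  rw [hA, hB, hC]
  have hδcancel : ENNReal.ofReal (δ ^ (-(N:ℝ))) * ENNReal.ofReal (δ ^ N) = 1 := by
    rw [← ENNReal.ofReal_mul (Real.rpow_nonneg hδ.le _), ← Real.rpow_natCast δ N,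
      ← Real.rpow_add hδ, neg_add_cancel, Real.rpow_zero, ENNReal.ofReal_one]
  have hCconst : ENNReal.ofReal ((2:ℝ) ^ (N + 2)) = q * 4 := by
    rw [ENNReal.ofReal_pow (by norm_num), ENNReal.ofReal_ofNat, pow_add, hqdef]
    norm_num
  calc ENNReal.ofReal (δ ^ (-(N:ℝ))) * (∑' k, a k) * (∑' k, b k)
      = ENNReal.ofReal (δ ^ (-(N:ℝ))) * ((∑' k, a k) * (∑' k, b k)) := by ring
    _ ≤ ENNReal.ofReal (δ ^ (-(N:ℝ))) * (ENNReal.ofReal (δ ^ N) * q * 4 * S) :=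
        mul_le_mul_right main _
    _ = (ENNReal.ofReal (δ ^ (-(N:ℝ))) * ENNReal.ofReal (δ ^ N)) * (q * 4 * S) := by ring
    _ = q * 4 * S := by rw [hδcancel, one_mul]
    _ = ENNReal.ofReal ((2:ℝ) ^ (N + 2)) * S := by rw [hCconst]
end
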